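/- arXiv:2001.11615 — 6 statements merged into one kernel-verified Lean document; each statement's English description precedes it below -/
import Mathlib

section
/- Let ψ ∈ 𝒞 and w ∈ ℝⁿ. There exists a solution x ∈ 𝒞 of the linear boundary value problem x'(t) − A(t)x(t) = ψ(t) for all t ≥ 0 subject to Γ(x) = w if and only if Wᵀ [ w − Γ( Φ(·)∫₀· Φ⁻¹(s)ψ(s) ds ) ] = 0. -/
open MeasureTheory Set RealInnerProductSpace

noncomputable section

/-- `Euc n` is Euclidean space `ℝⁿ` with the Euclidean norm. -/
abbrev Euc (n : ℕ) := EuclideanSpace ℝ (Fin n)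

/-- `Cb n` is the Banach space `𝒞` of bounded continuous functions from `[0,∞)` into `ℝⁿ`,
with the supremum norm. -/
abbrev Cb (n : ℕ) := BoundedContinuousFunction (Set.Ici (0:ℝ)) (Euc n)

theorem stmt_2 {n : ℕ} (hn : 1 ≤ n)
    -- the coefficient matrix `A`, the fundamental matrix `Φ` and its pointwise inverse `Φinv`
    (A Φ Φinv : ℝ → (Euc n →L[ℝ] Euc n))
    (hA : ContinuousOn A (Set.Ici 0))
    (hΦ0 : Φ 0 = 1)
    (hΦode : ∀ t ∈ Set.Ici (0:ℝ), HasDerivWithinAt Φ (A t ∘L Φ t) (Set.Ici 0) t)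
    (hΦinv : ∀ t ∈ Set.Ici (0:ℝ), Φ t ∘L Φinv t = 1 ∧ Φinv t ∘L Φ t = 1)
    -- condition guaranteeing `Φ(·)∫₀· Φ⁻¹(s)ψ(s) ds ∈ 𝒞`
    (K α : ℝ) (hK : 0 < K) (hα : 0 < α)
    (hKα : ∀ s t : ℝ, 0 ≤ s → s ≤ t → ‖Φ t ∘L Φinv s‖ ≤ K * Real.exp (-α * (t - s)))
    -- the bounded linear boundary operator `Γ` and the matrix `Λ`, whose columns are `Γ(Φᵢ)`
    (Γ : Cb n →L[ℝ] Euc n)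
    (ΦC : Euc n → Cb n) (hΦC : ∀ (v : Euc n) (t : Set.Ici (0:ℝ)), ΦC v t = Φ t v)
    (Λ : Euc n →L[ℝ] Euc n) (hΛ : ∀ v, Λ v = Γ (ΦC v))
    -- `p = dim ker Λ ≥ 1`, and the columns of `W` form a basis of `ker (Λᵀ)`
    (p : ℕ) (hp : 1 ≤ p)
    (hfinrank : Module.finrank ℝ (LinearMap.ker (Λ : Euc n →ₗ[ℝ] Euc n)) = p)
    (W : Fin p → Euc n)
    (hWmem : ∀ i, W i ∈ LinearMap.ker (ContinuousLinearMap.adjoint Λ : Euc n →ₗ[ℝ] Euc n))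
    (hWli : LinearIndependent ℝ W)
    (hWspan : Submodule.span ℝ (Set.range W) = LinearMap.ker (ContinuousLinearMap.adjoint Λ : Euc n →ₗ[ℝ] Euc n))
    -- the data: `ψ ∈ 𝒞`, `w ∈ ℝⁿ`, and the function `Φ(·)∫₀· Φ⁻¹(s)ψ(s) ds ∈ 𝒞`
    (ψC : Cb n) (w : Euc n)
    (Tψ : Cb n)
    (hTψ : ∀ t : Set.Ici (0:ℝ),
      Tψ t = Φ t (∫ s in (0:ℝ)..(t:ℝ), Φinv s (ψC (Set.projIci 0 s)))) :
    -- the linear BVP has a solution in `𝒞` iff `Wᵀ[w − Γ(Φ(·)∫₀· Φ⁻¹(s)ψ(s) ds)] = 0`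
    (∃ (xC : Cb n) (xe : ℝ → Euc n), (∀ t : Set.Ici (0:ℝ), xC t = xe t) ∧
        (∀ t ∈ Set.Ici (0:ℝ),
          HasDerivWithinAt xe (A t (xe t) + ψC (Set.projIci 0 t)) (Set.Ici 0) t) ∧
        Γ xC = w) ↔
      (∀ i, ⟪W i, w - Γ Tψ⟫ = 0) := by
  classical
  -- the inhomogeneity as a continuous function on ℝ
  set f : ℝ → Euc n := fun t => ψC (Set.projIci 0 t) with hf_def
  have hproj : Continuous (Set.projIci (0:ℝ)) :=
    Continuous.subtype_mk (continuous_const.max continuous_id) _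
  have hfcont : Continuous f := ψC.continuous.comp hproj
  have hΦcont : ContinuousOn Φ (Set.Ici 0) := fun t ht => (hΦode t ht).continuousWithinAt
  -- units
  have hU : ∀ t, t ∈ Set.Ici (0:ℝ) → IsUnit (Φ t) := by
    intro t ht
    exact ⟨⟨Φ t, Φinv t, (hΦinv t ht).1, (hΦinv t ht).2⟩, rfl⟩
  have hRinv : ∀ t, t ∈ Set.Ici (0:ℝ) → Ring.inverse (Φ t) = Φinv t := by
    intro t ht
    exact Ring.inverse_unit (⟨Φ t, Φinv t, (hΦinv t ht).1, (hΦinv t ht).2⟩ :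
      (Euc n →L[ℝ] Euc n)ˣ)
  have hΦΦinv : ∀ t, t ∈ Set.Ici (0:ℝ) → ∀ x : Euc n, Φ t (Φinv t x) = x := by
    intro t ht x
    have := DFunLike.congr_fun (hΦinv t ht).1 x
    simpa using this
  -- the well-behaved integrand
  set g : ℝ → Euc n := fun s => Ring.inverse (Φ (max s 0)) (f (max s 0)) with hg_def
  have hmax : Continuous fun s : ℝ => max s 0 := continuous_id.max continuous_const
  have hΦmax : Continuous fun s : ℝ => Φ (max s 0) :=
    hΦcont.comp_continuous hmax fun s => mem_Ici.mpr (le_max_right _ _)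
  have hIcont : Continuous fun s : ℝ => Ring.inverse (Φ (max s 0)) := by
    rw [continuous_iff_continuousAt]
    intro s
    obtain ⟨u, hu⟩ := hU (max s 0) (mem_Ici.mpr (le_max_right _ _))
    have h1 : ContinuousAt (Ring.inverse : (Euc n →L[ℝ] Euc n) → (Euc n →L[ℝ] Euc n))
        (Φ (max s 0)) := by
      rw [← hu]; exact NormedRing.inverse_continuousAt u
    exact ContinuousAt.comp (g := Ring.inverse)
      (f := fun s : ℝ => Φ (max s 0)) (x := s) h1 hΦmax.continuousAt
  have hgcont : Continuous g := hIcont.clm_apply (hfcont.comp hmax)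
  have hg_eq : ∀ s, s ∈ Set.Ici (0:ℝ) → g s = Φinv s (f s) := by
    intro s hs
    simp only [hg_def, max_eq_left (mem_Ici.mp hs), hRinv s hs]
  set F : ℝ → Euc n := fun t => ∫ s in (0:ℝ)..t, g s with hF_def
  have hF : ∀ t : ℝ, HasDerivAt F (g t) t := fun t =>
    intervalIntegral.integral_hasDerivAt_right (hgcont.intervalIntegrable _ _)
      (hgcont.stronglyMeasurableAtFilter _ _) hgcont.continuousAt
  -- `Tψ` agrees with `t ↦ Φ t (F t)` on `[0,∞)`
  have hTψF : ∀ t : Set.Ici (0:ℝ), Tψ t = Φ t (F t) := by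
    intro t
    rw [hTψ t]
    congr 1
    refine (intervalIntegral.integral_congr ?_).symm
    intro s hs
    rw [uIcc_of_le t.2] at hs
    exact hg_eq s hs.1
  -- derivative of `t ↦ Φ t (F t)`
  have hTd : ∀ t, t ∈ Set.Ici (0:ℝ) →
      HasDerivWithinAt (fun τ => Φ τ (F τ)) (A t (Φ t (F t)) + f t) (Set.Ici 0) t := by
    intro t ht
    have h2 := (hΦode t ht).clm_apply (hF t).hasDerivWithinAt
    refine h2.congr_deriv (Eq.symm ?_)
    rw [hg_eq t ht, hΦΦinv t ht]
    simp
  -- derivative of the candidate solutions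
  have hsol : ∀ (v : Euc n), ∀ t, t ∈ Set.Ici (0:ℝ) →
      HasDerivWithinAt (fun τ => Φ τ v + Φ τ (F τ))
        (A t (Φ t v + Φ t (F t)) + f t) (Set.Ici 0) t := by
    intro v t ht
    have h1 := (hΦode t ht).clm_apply (hasDerivWithinAt_const t _ v)
    have := h1.add (hTd t ht)
    refine this.congr_deriv (Eq.symm ?_)
    simp only [ContinuousLinearMap.comp_apply, map_add, map_zero]
    abel
  -- uniqueness: every solution has the above form
  have hrep : ∀ xe : ℝ → Euc n,
      (∀ t ∈ Set.Ici (0:ℝ), HasDerivWithinAt xe (A t (xe t) + f t) (Set.Ici 0) t) →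
      ∀ t, t ∈ Set.Ici (0:ℝ) → xe t = Φ t (xe 0) + Φ t (F t) := by
    intro xe hxe t ht
    set h : ℝ → Euc n := fun τ => xe τ - Φ τ (F τ) with hh_def
    have hh' : ∀ τ, τ ∈ Set.Ici (0:ℝ) → HasDerivWithinAt h (A τ (h τ)) (Set.Ici 0) τ := by
      intro τ hτ
      have := (hxe τ hτ).sub (hTd τ hτ)
      refine this.congr_deriv (Eq.symm ?_)
      simp only [hh_def, map_sub]
      abel
    set z : ℝ → Euc n := fun τ => Ring.inverse (Φ τ) (h τ) with hz_def
    have hz' : ∀ τ ∈ Set.Ici (0:ℝ), HasDerivWithinAt z (0 : Euc n) (Set.Ici 0) τ := by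
      intro τ hτ
      have hΦI : HasDerivWithinAt (fun σ => Ring.inverse (Φ σ))
          (-(Φinv τ * (A τ ∘L Φ τ) * Φinv τ)) (Set.Ici 0) τ := by
        have hu := hasFDerivAt_ringInverse (𝕜 := ℝ)
          (⟨Φ τ, Φinv τ, (hΦinv τ hτ).1, (hΦinv τ hτ).2⟩ : (Euc n →L[ℝ] Euc n)ˣ)
        have := hu.comp_hasDerivWithinAt τ (hΦode τ hτ)
        exact this.congr_deriv (Eq.symm rfl)
      have := hΦI.clm_apply (hh' τ hτ)
      refine this.congr_deriv (Eq.symm ?_)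
      rw [hRinv τ hτ]
      simp only [ContinuousLinearMap.neg_apply, ContinuousLinearMap.mul_apply,
        ContinuousLinearMap.comp_apply]
      rw [hΦΦinv τ hτ]
      exact (neg_add_cancel _).symm
    have hzconst : z t = z 0 := by
      have hb := Convex.norm_image_sub_le_of_norm_hasDerivWithin_le
        (f := z) (f' := fun _ => (0 : Euc n)) (C := 0)
        (fun x hx => hz' x hx) (fun x _ => by simp) (convex_Ici 0) (self_mem_Ici) ht
      have : ‖z t - z 0‖ ≤ 0 := by simpa using hb
      have := le_antisymm this (norm_nonneg _)
      rwa [norm_eq_zero, sub_eq_zero] at this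
    have hz0 : z 0 = xe 0 := by
      simp [hz_def, hh_def, hΦ0, hF_def, intervalIntegral.integral_same]
    have hzt : Φ t (z t) = h t := by
      show Φ t (Ring.inverse (Φ t) (h t)) = h t
      rw [hRinv t ht, hΦΦinv t ht]
    rw [hzconst, hz0] at hzt
    have hzt' : Φ t (xe 0) = xe t - Φ t (F t) := hzt
    rw [hzt']
    abel
  constructor
  · rintro ⟨xC, xe, hxCe, hode, hΓ⟩ i
    have hxe' : ∀ t ∈ Set.Ici (0:ℝ), HasDerivWithinAt xe (A t (xe t) + f t) (Set.Ici 0) t :=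
      hode
    have hrepr := hrep xe hxe'
    have hxCeq : xC = ΦC (xe 0) + Tψ := by
      ext t
      rw [hxCe t, BoundedContinuousFunction.add_apply, hΦC, hTψF t, hrepr t t.2]
    have hΓx : Γ xC = Λ (xe 0) + Γ Tψ := by rw [hxCeq, map_add, hΛ]
    have hw : w - Γ Tψ = Λ (xe 0) := by
      rw [← hΓ, hΓx]; abel
    rw [hw, ← ContinuousLinearMap.adjoint_inner_left]
    rw [show ContinuousLinearMap.adjoint Λ (W i) = 0 from LinearMap.mem_ker.mp (hWmem i)]
    exact inner_zero_left _
  · intro hinner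
    set u0 : Euc n := w - Γ Tψ with hu0_def
    have hmem : u0 ∈ (LinearMap.ker (ContinuousLinearMap.adjoint Λ : Euc n →ₗ[ℝ] Euc n))ᗮ := by
      rw [← hWspan, Submodule.mem_orthogonal]
      intro x hx
      induction hx using Submodule.span_induction with
      | mem x hx => obtain ⟨i, rfl⟩ := hx; exact hinner i
      | zero => exact inner_zero_left _
      | add x y _ _ hx hy => rw [inner_add_left, hx, hy, add_zero]
      | smul c x _ hx => rw [real_inner_smul_left, hx, mul_zero]
    have hortho : (LinearMap.ker (ContinuousLinearMap.adjoint Λ : Euc n →ₗ[ℝ] Euc n))ᗮ = LinearMap.range (Λ : Euc n →ₗ[ℝ] Euc n) := by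
      have h1 : LinearMap.ker (ContinuousLinearMap.adjoint Λ : Euc n →ₗ[ℝ] Euc n) = (LinearMap.range (Λ : Euc n →ₗ[ℝ] Euc n))ᗮ := by
        ext x
        rw [LinearMap.mem_ker, Submodule.mem_orthogonal]
        constructor
        · rintro hx u ⟨v, rfl⟩
          rw [ContinuousLinearMap.coe_coe, ← ContinuousLinearMap.adjoint_inner_right,
            show ContinuousLinearMap.adjoint Λ x = 0 from hx]
          exact inner_zero_right _
        · intro hx
          have h0 : ⟪ContinuousLinearMap.adjoint Λ x, ContinuousLinearMap.adjoint Λ x⟫ = 0 := by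
            rw [ContinuousLinearMap.adjoint_inner_left, real_inner_comm]
            exact hx _ ⟨_, rfl⟩
          exact inner_self_eq_zero.mp h0
      rw [h1, Submodule.orthogonal_orthogonal]
    rw [hortho] at hmem
    obtain ⟨v, hv⟩ := hmem
    refine ⟨ΦC v + Tψ, fun t => Φ t v + Φ t (F t), ?_, ?_, ?_⟩
    · intro t
      rw [BoundedContinuousFunction.add_apply, hΦC, hTψF]
    · intro t ht
      exact hsol v t ht
    · rw [map_add, ← hΛ, show Λ v = u0 from hv, hu0_def]
      abel
end
end

section
/- If Λ is invertible, then for every ψ ∈ 𝒞 and every w ∈ ℝⁿ the linear boundary value problem x'(t) − A(t)x(t) = ψ(t) for all t ≥ 0 subject to Γ(x) = w has a unique solution x ∈ 𝒞, namely the solution with initial value x(0) = Λ⁻¹[ w − Γ( Φ(·)∫₀· Φ⁻¹(s)ψ(s) ds ) ]. -/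
open MeasureTheory Set

noncomputable section

theorem stmt_3 {n : ℕ} (hn : 1 ≤ n)
    -- the coefficient matrix `A`, the fundamental matrix `Φ` and its pointwise inverse `Φinv`
    (A Φ Φinv : ℝ → (Euc n →L[ℝ] Euc n))
    (hA : ContinuousOn A (Set.Ici 0))
    (hΦ0 : Φ 0 = 1)
    (hΦode : ∀ t ∈ Set.Ici (0:ℝ), HasDerivWithinAt Φ (A t ∘L Φ t) (Set.Ici 0) t)
    (hΦinv : ∀ t ∈ Set.Ici (0:ℝ), Φ t ∘L Φinv t = 1 ∧ Φinv t ∘L Φ t = 1)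
    -- condition guaranteeing `Φ(·)∫₀· Φ⁻¹(s)ψ(s) ds ∈ 𝒞`
    (K α : ℝ) (hK : 0 < K) (hα : 0 < α)
    (hKα : ∀ s t : ℝ, 0 ≤ s → s ≤ t → ‖Φ t ∘L Φinv s‖ ≤ K * Real.exp (-α * (t - s)))
    -- the bounded linear boundary operator `Γ` and the matrix `Λ`, whose columns are `Γ(Φᵢ)`
    (Γ : Cb n →L[ℝ] Euc n)
    (ΦC : Euc n → Cb n) (hΦC : ∀ (v : Euc n) (t : Set.Ici (0:ℝ)), ΦC v t = Φ t v)
    (Λ : Euc n →L[ℝ] Euc n) (hΛ : ∀ v, Λ v = Γ (ΦC v))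
    -- `Λ` is invertible, with inverse `Λi`
    (Λi : Euc n →L[ℝ] Euc n) (hΛi : Λ ∘L Λi = 1 ∧ Λi ∘L Λ = 1)
    -- the data: `ψ ∈ 𝒞`, `w ∈ ℝⁿ`, and the function `Φ(·)∫₀· Φ⁻¹(s)ψ(s) ds ∈ 𝒞`
    (ψC : Cb n) (w : Euc n)
    (Tψ : Cb n)
    (hTψ : ∀ t : Set.Ici (0:ℝ),
      Tψ t = Φ t (∫ s in (0:ℝ)..(t:ℝ), Φinv s (ψC (Set.projIci 0 s)))) :
    -- there is a unique solution `xC ∈ 𝒞` of the BVP, with `x(0) = Λ⁻¹[w − Γ(Φ(·)∫₀·Φ⁻¹ψ)]`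
    ∃ xC : Cb n,
      ((∃ xe : ℝ → Euc n, (∀ t : Set.Ici (0:ℝ), xC t = xe t) ∧
          ∀ t ∈ Set.Ici (0:ℝ),
            HasDerivWithinAt xe (A t (xe t) + ψC (Set.projIci 0 t)) (Set.Ici 0) t) ∧
        Γ xC = w) ∧
      (∀ yC : Cb n,
        ((∃ ye : ℝ → Euc n, (∀ t : Set.Ici (0:ℝ), yC t = ye t) ∧
            ∀ t ∈ Set.Ici (0:ℝ),
              HasDerivWithinAt ye (A t (ye t) + ψC (Set.projIci 0 t)) (Set.Ici 0) t) ∧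
          Γ yC = w) → yC = xC) ∧
      xC ⟨0, Set.self_mem_Ici⟩ = Λi (w - Γ Tψ) := by
  classical
  -- basic continuity facts
  have hΦcont : ContinuousOn Φ (Set.Ici 0) := fun t ht => (hΦode t ht).continuousWithinAt
  have hΦinvcont : ContinuousOn Φinv (Set.Ici 0) := by
    have hu : ∀ s ∈ Set.Ici (0:ℝ), Φinv s = Ring.inverse (Φ s) := fun s hs =>
      (Ring.inverse_unit ⟨Φ s, Φinv s, (hΦinv s hs).1, (hΦinv s hs).2⟩).symm
    intro t ht
    have hct : ContinuousAt Ring.inverse (Φ t) :=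
      NormedRing.inverse_continuousAt ⟨Φ t, Φinv t, (hΦinv t ht).1, (hΦinv t ht).2⟩
    exact (hct.comp_continuousWithinAt (hΦcont t ht)).congr hu (hu t ht)
  have hproj : Continuous (fun s : ℝ => (Set.projIci (0:ℝ) s)) :=
    Continuous.subtype_mk (continuous_const.max continuous_id) _
  have hψcont : Continuous fun s : ℝ => ψC (Set.projIci (0:ℝ) s) :=
    ψC.continuous.comp hproj
  set f : ℝ → Euc n := fun s => Φinv s (ψC (Set.projIci 0 s)) with hfdef
  have hfcont : ContinuousOn f (Set.Ici 0) :=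
    hΦinvcont.clm_apply hψcont.continuousOn
  set g : ℝ → Euc n := fun s => f (max 0 s) with hgdef
  have hgf : ∀ s ∈ Set.Ici (0:ℝ), g s = f s := by
    intro s hs; simp only [hgdef]; rw [max_eq_right hs]
  have hgcont : Continuous g :=
    hfcont.comp_continuous (continuous_const.max continuous_id) fun x => Set.mem_Ici.mpr (le_max_left _ _)
  set G : ℝ → Euc n := fun t => ∫ s in (0:ℝ)..t, g s with hGdef
  have hGderiv : ∀ t : ℝ, HasDerivAt G (g t) t := by
    intro t
    exact intervalIntegral.integral_hasDerivAt_right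
      (hgcont.intervalIntegrable _ _)
      hgcont.aestronglyMeasurable.stronglyMeasurableAtFilter
      hgcont.continuousAt
  have hGeq : ∀ t : ℝ, 0 ≤ t → G t = ∫ s in (0:ℝ)..t, f s := by
    intro t ht
    refine intervalIntegral.integral_congr ?_
    intro s hs
    rw [Set.uIcc_of_le ht] at hs
    exact hgf s hs.1
  -- the candidate solution
  set v0 : Euc n := Λi (w - Γ Tψ) with hv0def
  set xe : ℝ → Euc n := fun t => Φ t (v0 + G t) with hxedef
  set xC : Cb n := ΦC v0 + Tψ with hxCdef
  have hxCxe : ∀ t : Set.Ici (0:ℝ), xC t = xe t := by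
    intro t
    have h1 : xC t = ΦC v0 t + Tψ t := rfl
    rw [h1, hΦC, hTψ, ← hGeq t t.2, ← map_add]
  -- general derivative computation for `t ↦ Φ t (c + G t)`
  have hkey : ∀ (c : Euc n), ∀ t ∈ Set.Ici (0:ℝ),
      HasDerivWithinAt (fun t => Φ t (c + G t))
        (A t (Φ t (c + G t)) + ψC (Set.projIci 0 t)) (Set.Ici 0) t := by
    intro c t ht
    have hy : HasDerivWithinAt (fun t => c + G t) (g t) (Set.Ici 0) t :=
      ((hGderiv t).const_add c).hasDerivWithinAt
    have h2 := (hΦode t ht).clm_apply hy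
    have h3 : (A t ∘L Φ t) (c + G t) + Φ t (g t)
        = A t (Φ t (c + G t)) + ψC (Set.projIci 0 t) := by
      rw [ContinuousLinearMap.comp_apply, hgf t ht, hfdef]
      have h4 : Φ t (Φinv t (ψC (Set.projIci 0 t)))
          = (Φ t ∘L Φinv t) (ψC (Set.projIci 0 t)) := rfl
      rw [h4, (hΦinv t ht).1, ContinuousLinearMap.one_apply]
    rwa [h3] at h2
  have hxederiv : ∀ t ∈ Set.Ici (0:ℝ),
      HasDerivWithinAt xe (A t (xe t) + ψC (Set.projIci 0 t)) (Set.Ici 0) t :=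
    hkey v0
  -- Γ xC = w
  have hΓx : Γ xC = w := by
    have h1 : Γ xC = Γ (ΦC v0) + Γ Tψ := by rw [hxCdef, map_add]
    have h2 : Γ (ΦC v0) = Λ v0 := (hΛ v0).symm
    have h3 : Λ v0 = w - Γ Tψ := by
      rw [hv0def, ← ContinuousLinearMap.comp_apply, hΛi.1, ContinuousLinearMap.one_apply]
    rw [h1, h2, h3]; abel
  -- initial value
  have hx0 : xC ⟨0, Set.self_mem_Ici⟩ = Λi (w - Γ Tψ) := by
    rw [hxCxe ⟨0, Set.self_mem_Ici⟩]
    show Φ (0:ℝ) (v0 + G 0) = Λi (w - Γ Tψ)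
    have hG0 : G (0:ℝ) = 0 := intervalIntegral.integral_same
    rw [hG0, add_zero, hΦ0, ContinuousLinearMap.one_apply, hv0def]
  -- uniqueness
  refine ⟨xC, ⟨⟨xe, hxCxe, hxederiv⟩, hΓx⟩, ?_, hx0⟩
  intro yC ⟨⟨ye, hyCye, hyederiv⟩, hΓy⟩
  -- `ye` is continuous on `Ici 0`
  have hyecont : ContinuousOn ye (Set.Ici 0) := fun t ht =>
    (hyederiv t ht).continuousWithinAt
  set d : Euc n := ye 0 - v0 with hddef
  set ze : ℝ → Euc n := fun t => Φ t ((v0 + d) + G t) with hzedef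
  have hzederiv : ∀ t ∈ Set.Ici (0:ℝ),
      HasDerivWithinAt ze (A t (ze t) + ψC (Set.projIci 0 t)) (Set.Ici 0) t :=
    hkey (v0 + d)
  have hzecont : ContinuousOn ze (Set.Ici 0) := fun t ht =>
    (hzederiv t ht).continuousWithinAt
  have hze0 : ze 0 = ye 0 := by
    show Φ (0:ℝ) ((v0 + d) + G 0) = ye 0
    have hG0 : G (0:ℝ) = 0 := intervalIntegral.integral_same
    rw [hG0, add_zero, hΦ0, ContinuousLinearMap.one_apply, hddef]
    abel
  -- ODE uniqueness on every interval [0, b]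
  have huniq : ∀ t : ℝ, 0 ≤ t → ye t = ze t := by
    intro b hb
    -- clamp function
    set cl : ℝ → ℝ := fun t => min (max 0 t) b with hcldef
    have hclmem : ∀ t, cl t ∈ Set.Icc 0 b := by
      intro t
      constructor
      · exact le_min (le_max_left _ _) hb
      · exact min_le_right _ _
    have hcleq : ∀ t ∈ Set.Ico (0:ℝ) b, cl t = t := by
      intro t ht
      rw [hcldef]
      simp only [max_eq_right ht.1]
      exact min_eq_left ht.2.le
    obtain ⟨C, hC⟩ := (isCompact_Icc (a := (0:ℝ)) (b := b)).exists_bound_of_continuousOn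
      (hA.mono (fun x hx => hx.1))
    set C' : NNReal := ⟨max C 0, le_max_right _ _⟩ with hC'def
    set v : ℝ → Euc n → Euc n :=
      fun t x => A (cl t) x + ψC (Set.projIci 0 t) with hvdef
    have hv : ∀ t, LipschitzWith C' (v t) := by
      intro t
      have h1 : LipschitzWith ‖A (cl t)‖₊ (fun x => A (cl t) x) := (A (cl t)).lipschitz
      have h2 : ‖A (cl t)‖₊ ≤ C' := by
        rw [← NNReal.coe_le_coe, coe_nnnorm]
        exact (hC _ (hclmem t)).trans (le_max_left _ _)
      have h3 : LipschitzWith C' (fun x => A (cl t) x) := h1.weaken h2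
      have h4 : Isometry (fun y : Euc n => y + ψC (Set.projIci 0 t)) :=
        isometry_add_right _
      have h5 := (h4.lipschitz).comp h3
      rw [one_mul] at h5
      exact h5
    have := ODE_solution_unique (v := v) (K := C') (f := ye) (g := ze) (a := 0) (b := b)
      hv
      (hyecont.mono Set.Icc_subset_Ici_self)
      (fun t ht => by
        have h := (hyederiv t ht.1).mono (Set.Ici_subset_Ici.2 ht.1)
        have : v t (ye t) = A t (ye t) + ψC (Set.projIci 0 t) := by
          rw [hvdef]; simp only [hcleq t ht]
        rwa [this])
      (hzecont.mono Set.Icc_subset_Ici_self)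
      (fun t ht => by
        have h := (hzederiv t ht.1).mono (Set.Ici_subset_Ici.2 ht.1)
        have : v t (ze t) = A t (ze t) + ψC (Set.projIci 0 t) := by
          rw [hvdef]; simp only [hcleq t ht]
        rwa [this])
      hze0.symm
    exact this ⟨hb, le_rfl⟩
  -- difference is `Φ t d`
  have hdiff : ∀ t : Set.Ici (0:ℝ), yC t - xC t = ΦC d t := by
    intro t
    rw [hyCye t, hxCxe t, hΦC, huniq t t.2, hzedef, hxedef]
    show Φ (t:ℝ) ((v0 + d) + G t) - Φ (t:ℝ) (v0 + G t) = Φ (t:ℝ) d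
    rw [← map_sub]
    congr 1
    abel
  have hΦCd : ΦC d = yC - xC := by
    ext t
    rw [← hdiff t]
    rfl
  have hΛd : Λ d = 0 := by
    rw [hΛ d, hΦCd, map_sub, hΓy, hΓx, sub_self]
  have hd0 : d = 0 := by
    have := congrArg (fun (T : Euc n →L[ℝ] Euc n) => T d) hΛi.2
    simp only [ContinuousLinearMap.comp_apply, ContinuousLinearMap.one_apply] at this
    rw [← this, hΛd, map_zero]
  apply BoundedContinuousFunction.ext
  intro t
  have h := hdiff t
  rw [hd0, hΦC] at h
  simp only [map_zero] at h
  exact sub_eq_zero.mp h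
end
end

section
/- Suppose conditions (I)–(V) hold, y ∈ ker(Λ), and the linear map φ : ker(Λ) → ℝᵖ defined by φ(w) = Wᵀ[ ∫₀^∞ (∂g/∂x)(t,x_y(t))Φ(t) dt − Γ( Φ(·)∫₀· Φ⁻¹(s)(∂f/∂x)(s,x_y(s))Φ(s) ds ) ] w is a bijection from ker(Λ) onto ℝᵖ. Then the partial Fréchet derivative ∂H/∂(x,v) of H = (H₁,H₂) with respect to (x,v) at the point ((x_y, y), 0) is a bijection from 𝒞 × ker(Λ) onto 𝒞 × ℝᵖ. -/
open MeasureTheory Set RealInnerProductSpace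

noncomputable section

theorem stmt_11 {n : ℕ} (hn : 1 ≤ n)
    -- the coefficient matrix `A`, the fundamental matrix `Φ` and its pointwise inverse `Φinv`
    (A Φ Φinv : ℝ → (Euc n →L[ℝ] Euc n))
    (hA : ContinuousOn A (Set.Ici 0))
    (hΦ0 : Φ 0 = 1)
    (hΦode : ∀ t ∈ Set.Ici (0:ℝ), HasDerivWithinAt Φ (A t ∘L Φ t) (Set.Ici 0) t)
    (hΦinv : ∀ t ∈ Set.Ici (0:ℝ), Φ t ∘L Φinv t = 1 ∧ Φinv t ∘L Φ t = 1)
    -- condition guaranteeing `Φ(·)∫₀· Φ⁻¹(s)ψ(s) ds ∈ 𝒞`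
    (K α : ℝ) (hK : 0 < K) (hα : 0 < α)
    (hKα : ∀ s t : ℝ, 0 ≤ s → s ≤ t → ‖Φ t ∘L Φinv s‖ ≤ K * Real.exp (-α * (t - s)))
    -- the bounded linear boundary operator `Γ` and the matrix `Λ`, whose columns are `Γ(Φᵢ)`
    (Γ : Cb n →L[ℝ] Euc n)
    (ΦC : Euc n → Cb n) (hΦC : ∀ (v : Euc n) (t : Set.Ici (0:ℝ)), ΦC v t = Φ t v)
    (Λ : Euc n →L[ℝ] Euc n) (hΛ : ∀ v, Λ v = Γ (ΦC v))
    -- `p = dim ker Λ ≥ 1`, the columns of `W` form a basis of `ker (Λᵀ)`, and `Wᵀ` is the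
    -- induced linear map `ℝⁿ → ℝᵖ`, `(Wᵀz)ᵢ = ⟪Wᵢ, z⟫`
    (p : ℕ) (hp : 1 ≤ p)
    (hfinrank : Module.finrank ℝ (LinearMap.ker (Λ : Euc n →ₗ[ℝ] Euc n)) = p)
    (W : Fin p → Euc n)
    (hWmem : ∀ i, W i ∈ LinearMap.ker (ContinuousLinearMap.adjoint Λ : Euc n →ₗ[ℝ] Euc n))
    (hWli : LinearIndependent ℝ W)
    (hWspan : Submodule.span ℝ (Set.range W) = LinearMap.ker (ContinuousLinearMap.adjoint Λ : Euc n →ₗ[ℝ] Euc n))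
    (WT : Euc n →L[ℝ] Euc p) (hWT : ∀ z i, WT z i = ⟪W i, z⟫)
    -- `f` and `g` are continuously differentiable
    (f g : ℝ → Euc n → Euc n)
    (hf : ContDiff ℝ 1 fun q : ℝ × Euc n => f q.1 q.2)
    (hg : ContDiff ℝ 1 fun q : ℝ × Euc n => g q.1 q.2)
    -- condition (II)
    (hIIa : ∀ S : Set (Euc n), IsCompact S →
      UniformContinuousOn (fun q : ℝ × Euc n => fderiv ℝ (f q.1) q.2) (Set.Ici 0 ×ˢ S))
    (hIIb : ∃ M, ∀ t ≥ (0:ℝ), ‖fderiv ℝ (f t) 0‖ ≤ M)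
    -- condition (III)
    (hIIIa : ∀ S : Set (Euc n), IsCompact S →
      UniformContinuousOn (fun q : ℝ × Euc n => fderiv ℝ (g q.1) q.2) (Set.Ici 0 ×ˢ S))
    (hIIIb : IntegrableOn (fun t => ‖fderiv ℝ (g t) 0‖) (Set.Ici 0))
    -- condition (IV)
    (hIV : ∀ x : Cb n, IntegrableOn (fun t => g t (x (Set.projIci 0 t))) (Set.Ici 0))
    -- condition (V)
    (hV : ∃ sfun : ℝ → ℝ, IntegrableOn sfun (Set.Ici 0) ∧
      ∀ t ≥ (0:ℝ), ∀ x₁ x₂ : Euc n,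
        ‖fderiv ℝ (g t) x₁ - fderiv ℝ (g t) x₂‖ ≤ sfun t * ‖x₁ - x₂‖)
    -- `h ∈ 𝒞`
    (h : Cb n)
    -- `y ∈ ker Λ` and `x_y = Φ(·)y + Φ(·)∫₀· Φ⁻¹(s)h(s) ds ∈ 𝒞`
    (y : ↥(LinearMap.ker (Λ : Euc n →ₗ[ℝ] Euc n))) (xyC : Cb n)
    (hxyC : ∀ t : Set.Ici (0:ℝ), xyC t = Φ t (y : Euc n) +
      Φ t (∫ s in (0:ℝ)..(t:ℝ), Φinv s (h (Set.projIci 0 s))))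
    -- `Tfd x ψ = Φ(·)∫₀· Φ⁻¹(s) (∂f/∂x)(s,x(s))ψ(s) ds ∈ 𝒞`
    (Tfd : Cb n → Cb n → Cb n)
    (hTfd : ∀ (x ψ : Cb n) (t : Set.Ici (0:ℝ)),
      Tfd x ψ t = Φ t (∫ s in (0:ℝ)..(t:ℝ),
        Φinv s (fderiv ℝ (f s) (x (Set.projIci 0 s)) (ψ (Set.projIci 0 s)))))
    -- `TfdΦ w = Φ(·)∫₀· Φ⁻¹(s) (∂f/∂x)(s,x_y(s)) Φ(s) w ds ∈ 𝒞`
    (TfdΦ : Euc n → Cb n)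
    (hTfdΦ : ∀ (w : Euc n) (t : Set.Ici (0:ℝ)),
      TfdΦ w t = Φ t (∫ s in (0:ℝ)..(t:ℝ),
        Φinv s (fderiv ℝ (f s) (xyC (Set.projIci 0 s)) (Φ s w))))
    -- the linear map `φ : ker(Λ) → ℝᵖ` is a bijection onto `ℝᵖ`
    (hφbij : Function.Bijective fun w : ↥(LinearMap.ker (Λ : Euc n →ₗ[ℝ] Euc n)) =>
      WT ((∫ t in Set.Ici (0:ℝ),
          fderiv ℝ (g t) (xyC (Set.projIci 0 t)) (Φ t (w : Euc n))) -
        Γ (TfdΦ (w : Euc n)))) :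
    -- then the partial derivative `∂H/∂(x,v)((x_y,y),0)` is a bijection of `𝒞 × ker(Λ)`
    -- onto `𝒞 × ℝᵖ`
    ∀ D : (Cb n × ↥(LinearMap.ker (Λ : Euc n →ₗ[ℝ] Euc n))) →L[ℝ] (Cb n × Euc p),
      (∀ (ψ : Cb n) (w : ↥(LinearMap.ker (Λ : Euc n →ₗ[ℝ] Euc n))),
        (∀ t : Set.Ici (0:ℝ), (D (ψ, w)).1 t = ψ t - Φ t (w : Euc n)) ∧
        (D (ψ, w)).2 =
          WT ((∫ t in Set.Ici (0:ℝ),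
              fderiv ℝ (g t) (xyC (Set.projIci 0 t)) (ψ (Set.projIci 0 t))) -
            Γ (Tfd xyC ψ))) →
      Function.Bijective D := by
  intro D hD
  set F : ↥(LinearMap.ker (Λ : Euc n →ₗ[ℝ] Euc n)) → Euc p := fun w =>
      WT ((∫ t in Set.Ici (0:ℝ),
          fderiv ℝ (g t) (xyC (Set.projIci 0 t)) (Φ t (w : Euc n))) -
        Γ (TfdΦ (w : Euc n))) with hF
  have hΦCproj : ∀ (v : Euc n) (s : ℝ), 0 ≤ s → ΦC v (Set.projIci 0 s) = Φ s v := by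
    intro v s hs
    rw [hΦC, Set.projIci_of_mem hs]
  have hTfdEq : ∀ v : Euc n, Tfd xyC (ΦC v) = TfdΦ v := by
    intro v
    apply BoundedContinuousFunction.ext
    intro t
    rw [hTfd, hTfdΦ]
    congr 1
    apply intervalIntegral.integral_congr
    intro s hs
    rw [Set.uIcc_of_le t.2] at hs
    dsimp only
    rw [hΦCproj v s hs.1]
  have hIntEq : ∀ v : Euc n,
      (∫ t in Set.Ici (0:ℝ),
        fderiv ℝ (g t) (xyC (Set.projIci 0 t)) ((ΦC v) (Set.projIci 0 t))) =
      ∫ t in Set.Ici (0:ℝ), fderiv ℝ (g t) (xyC (Set.projIci 0 t)) (Φ t v) := by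
    intro v
    apply MeasureTheory.setIntegral_congr_fun measurableSet_Ici
    intro t ht
    dsimp only
    rw [hΦCproj v t ht]
  have hDΦ : ∀ w : ↥(LinearMap.ker (Λ : Euc n →ₗ[ℝ] Euc n)), D (ΦC (w : Euc n), w) = (0, F w) := by
    intro w
    obtain ⟨h1, h2⟩ := hD (ΦC (w : Euc n)) w
    refine Prod.ext ?_ ?_
    · apply BoundedContinuousFunction.ext
      intro t
      rw [h1 t, hΦC]
      simp
    · rw [h2, hTfdEq, hIntEq]
  have hDχ1 : ∀ χ : Cb n, (D (χ, 0)).1 = χ := by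
    intro χ
    apply BoundedContinuousFunction.ext
    intro t
    rw [(hD χ 0).1 t]
    simp
  have hF0 : F 0 = 0 := by
    have hT0 : TfdΦ (0 : Euc n) = 0 := by
      apply BoundedContinuousFunction.ext
      intro t
      rw [hTfdΦ]
      simp
    rw [hF]
    simp [hT0]
  constructor
  · -- injective
    intro a b hab
    have hz : D (a - b) = 0 := by rw [map_sub, hab, sub_self]
    obtain ⟨h1, h2⟩ := hD (a - b).1 (a - b).2
    have hab' : (a - b) = ((a - b).1, (a - b).2) := rfl
    rw [← hab'] at h1 h2
    have hψ : (a - b).1 = ΦC ((a - b).2 : Euc n) := by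
      apply BoundedContinuousFunction.ext
      intro t
      have h1t := h1 t
      rw [hz] at h1t
      simp only [Prod.fst_zero, BoundedContinuousFunction.coe_zero, Pi.zero_apply] at h1t
      rw [hΦC]
      exact (sub_eq_zero.mp h1t.symm)
    have hDz : D (ΦC ((a - b).2 : Euc n), (a - b).2) = 0 := by
      rw [← hψ, ← hab', hz]
    rw [hDΦ] at hDz
    have hFz : F (a - b).2 = 0 := (Prod.ext_iff.mp hDz).2
    have hw0 : (a - b).2 = 0 := hφbij.1 (by rw [hFz, hF0])
    have hψ0 : (a - b).1 = 0 := by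
      rw [hψ, hw0]
      apply BoundedContinuousFunction.ext
      intro t
      rw [hΦC]
      simp
    have hab0 : a - b = 0 := by rw [hab', hψ0, hw0]; rfl
    exact sub_eq_zero.mp hab0
  · -- surjective
    intro z
    obtain ⟨w, hw⟩ := hφbij.2 (z.2 - (D (z.1, 0)).2)
    refine ⟨(z.1 + ΦC (w : Euc n), w), ?_⟩
    have hsplit : ((z.1 + ΦC (w : Euc n), w) : Cb n × ↥(LinearMap.ker (Λ : Euc n →ₗ[ℝ] Euc n)))
        = (z.1, 0) + (ΦC (w : Euc n), w) := by
      simp [Prod.ext_iff]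
    rw [hsplit, map_add, hDΦ]
    refine Prod.ext ?_ ?_
    · simp [hDχ1]
    · simp only [Prod.snd_add]
      rw [hw]
      abel
end
end

section
/- Suppose conditions (I') and (VII') hold. Then for all x, ψ ∈ 𝒞, the function t ↦ Φ(t)∫₀ᵗ Φ⁻¹(s)[ f(s, x(s)+ψ(s)) − f(s, x(s)) − (∂f/∂x)(s, x(s)) ψ(s) ] ds has supremum norm over t ∈ [0,∞) at most K ‖h₂‖_{L¹} ‖ψ‖∞², where ‖h₂‖_{L¹} = ∫₀^∞ |h₂(t)| dt. -/
open MeasureTheory Set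

noncomputable section

/-- Quadratic remainder bound from the Lipschitz bound on the derivative. -/
lemma taylor_bound {n : ℕ} (f : Euc n → Euc n) (hf : ContDiff ℝ 1 f) (C : ℝ) (hC : 0 ≤ C)
    (hlip : ∀ x₁ x₂ : Euc n, ‖fderiv ℝ f x₁ - fderiv ℝ f x₂‖ ≤ C * ‖x₁ - x₂‖)
    (a b : Euc n) : ‖f (a + b) - f a - fderiv ℝ f a b‖ ≤ C * ‖b‖ ^ 2 := by
  have hseg : Convex ℝ (segment ℝ a (a + b)) := convex_segment _ _
  have hb : ∀ y ∈ segment ℝ a (a + b), ‖y - a‖ ≤ ‖b‖ := by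
    rintro y ⟨u, v, hu, hv, huv, rfl⟩
    have : u • a + v • (a + b) - a = v • b := by
      have : u = 1 - v := by linarith
      subst this
      module
    rw [this, norm_smul, Real.norm_eq_abs, abs_of_nonneg hv]
    nlinarith [norm_nonneg b]
  have key : ‖f (a + b) - f a - (fderiv ℝ f a) ((a + b) - a)‖ ≤ (C * ‖b‖) * ‖(a + b) - a‖ := by
    apply hseg.norm_image_sub_le_of_norm_fderiv_le'
        (fun y _ => (hf.differentiable one_ne_zero).differentiableAt)
        (fun y hy => ?_) (left_mem_segment ℝ a (a + b)) (right_mem_segment ℝ a (a + b))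
    calc ‖fderiv ℝ f y - fderiv ℝ f a‖ ≤ C * ‖y - a‖ := hlip y a
      _ ≤ C * ‖b‖ := by exact mul_le_mul_of_nonneg_left (hb y hy) hC
  have hba : a + b - a = b := by abel
  rw [hba] at key
  calc ‖f (a + b) - f a - fderiv ℝ f a b‖ ≤ C * ‖b‖ * ‖b‖ := key
    _ = C * ‖b‖ ^ 2 := by ring

theorem stmt_15 {n : ℕ} (hn : 1 ≤ n)
    -- the coefficient matrix `A`, the fundamental matrix `Φ` and its pointwise inverse `Φinv`
    (A Φ Φinv : ℝ → (Euc n →L[ℝ] Euc n))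
    (hA : ContinuousOn A (Set.Ici 0))
    (hΦ0 : Φ 0 = 1)
    (hΦode : ∀ t ∈ Set.Ici (0:ℝ), HasDerivWithinAt Φ (A t ∘L Φ t) (Set.Ici 0) t)
    (hΦinv : ∀ t ∈ Set.Ici (0:ℝ), Φ t ∘L Φinv t = 1 ∧ Φinv t ∘L Φ t = 1)
    -- condition (I'): `‖Φ(t)Φ⁻¹(s)‖ ≤ K` for all `t ≥ s ≥ 0`
    (K : ℝ) (hK : 0 < K)
    (hKb : ∀ s t : ℝ, 0 ≤ s → s ≤ t → ‖Φ t ∘L Φinv s‖ ≤ K)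
    -- `f` is continuously differentiable in its second (ℝⁿ) variable
    (f : ℝ → Euc n → Euc n) (hf : ∀ t, ContDiff ℝ 1 (f t))
    -- condition (VII'): an integrable Lipschitz-type bound `h₂` for `∂f/∂x`
    (h₂ : ℝ → ℝ) (hh₂int : IntegrableOn h₂ (Set.Ici 0))
    (hh₂ : ∀ t ≥ (0:ℝ), ∀ x₁ x₂ : Euc n,
      ‖fderiv ℝ (f t) x₁ - fderiv ℝ (f t) x₂‖ ≤ h₂ t * ‖x₁ - x₂‖) :
    -- the sup-norm bound `K ‖h₂‖_{L¹} ‖ψ‖∞²` holds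
    ∀ x ψ : Cb n, ∀ t ≥ (0:ℝ),
      ‖Φ t (∫ s in (0:ℝ)..t, Φinv s
          (f s (x (Set.projIci 0 s) + ψ (Set.projIci 0 s)) - f s (x (Set.projIci 0 s)) -
            fderiv ℝ (f s) (x (Set.projIci 0 s)) (ψ (Set.projIci 0 s))))‖ ≤
        K * (∫ s in Set.Ici (0:ℝ), |h₂ s|) * ‖ψ‖ ^ 2 := by
  -- h₂ is nonnegative on [0,∞)
  have hh₂nn : ∀ s : ℝ, 0 ≤ s → 0 ≤ h₂ s := by
    intro s hs
    have h1 := hh₂ s hs (EuclideanSpace.single (⟨0, hn⟩ : Fin n) (1:ℝ)) 0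
    have h2 : ‖EuclideanSpace.single (⟨0, hn⟩ : Fin n) (1:ℝ) - 0‖ = 1 := by
      simp [EuclideanSpace.norm_single]
    rw [h2, mul_one] at h1
    exact le_trans (norm_nonneg _) h1
  intro x ψ t ht
  set F : ℝ → Euc n := fun s =>
    f s (x (Set.projIci 0 s) + ψ (Set.projIci 0 s)) - f s (x (Set.projIci 0 s)) -
      fderiv ℝ (f s) (x (Set.projIci 0 s)) (ψ (Set.projIci 0 s)) with hF
  have rhs_nn : 0 ≤ K * (∫ s in Set.Ici (0:ℝ), |h₂ s|) * ‖ψ‖ ^ 2 := by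
    apply mul_nonneg (mul_nonneg hK.le _) (pow_nonneg (norm_nonneg _) 2)
    exact integral_nonneg fun s => abs_nonneg _
  by_cases hg : IntervalIntegrable (fun s => Φinv s (F s)) volume 0 t
  · rw [← (Φ t).intervalIntegral_comp_comm hg]
    -- pointwise bound on the integrand
    have hptwise : ∀ s ∈ Set.Ioc (0:ℝ) t,
        ‖Φ t (Φinv s (F s))‖ ≤ K * ‖ψ‖ ^ 2 * |h₂ s| := by
      intro s hs
      have hs0 : (0:ℝ) ≤ s := hs.1.le
      have hFs : ‖F s‖ ≤ h₂ s * ‖ψ‖ ^ 2 := by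
        have := taylor_bound (f s) (hf s) (h₂ s) (hh₂nn s hs0)
          (fun x₁ x₂ => hh₂ s hs0 x₁ x₂) (x (Set.projIci 0 s)) (ψ (Set.projIci 0 s))
        refine this.trans ?_
        apply mul_le_mul_of_nonneg_left _ (hh₂nn s hs0)
        have hψ : ‖ψ (Set.projIci 0 s)‖ ≤ ‖ψ‖ := ψ.norm_coe_le_norm _
        exact pow_le_pow_left₀ (norm_nonneg _) hψ 2
      have hcomp : Φ t (Φinv s (F s)) = (Φ t ∘L Φinv s) (F s) := rfl
      rw [hcomp]
      calc ‖(Φ t ∘L Φinv s) (F s)‖ ≤ ‖Φ t ∘L Φinv s‖ * ‖F s‖ :=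
            (Φ t ∘L Φinv s).le_opNorm _
        _ ≤ K * (h₂ s * ‖ψ‖ ^ 2) := by
            apply mul_le_mul (hKb s t hs0 hs.2) hFs (norm_nonneg _) hK.le
        _ = K * ‖ψ‖ ^ 2 * h₂ s := by ring
        _ ≤ K * ‖ψ‖ ^ 2 * |h₂ s| := by
            apply mul_le_mul_of_nonneg_left (le_abs_self _)
            exact mul_nonneg hK.le (pow_nonneg (norm_nonneg _) 2)
    have hintIoc : IntegrableOn (fun s => |h₂ s|) (Set.Ioc 0 t) volume :=
      (hh₂int.mono_set (Set.Ioc_subset_Icc_self.trans Set.Icc_subset_Ici_self)).abs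
    have hbound : IntervalIntegrable (fun s => K * ‖ψ‖ ^ 2 * |h₂ s|) volume 0 t := by
      rw [intervalIntegrable_iff, Set.uIoc_of_le ht]
      exact hintIoc.const_mul _
    have hae : ∀ᵐ s ∂(volume.restrict (Set.uIoc (0:ℝ) t)),
        ‖Φ t (Φinv s (F s))‖ ≤ K * ‖ψ‖ ^ 2 * |h₂ s| := by
      rw [Set.uIoc_of_le ht]
      exact (ae_restrict_iff' measurableSet_Ioc).mpr
        (Filter.Eventually.of_forall fun s hs => hptwise s hs)
    have hmain := intervalIntegral.norm_integral_le_abs_of_norm_le hae hbound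
    refine hmain.trans ?_
    have hI : (∫ s in (0:ℝ)..t, K * ‖ψ‖ ^ 2 * |h₂ s|) =
        ∫ s in Set.Ioc (0:ℝ) t, K * ‖ψ‖ ^ 2 * |h₂ s| := by
      rw [intervalIntegral.integral_of_le ht]
    have habs : abs (∫ s in (0:ℝ)..t, K * ‖ψ‖ ^ 2 * |h₂ s|) =
        ∫ s in (0:ℝ)..t, K * ‖ψ‖ ^ 2 * |h₂ s| := by
      apply abs_of_nonneg
      rw [hI]
      apply integral_nonneg
      intro s
      exact mul_nonneg (mul_nonneg hK.le (pow_nonneg (norm_nonneg _) 2)) (abs_nonneg _)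
    rw [habs, hI]
    rw [integral_const_mul]
    have hmono : (∫ s in Set.Ioc (0:ℝ) t, |h₂ s|) ≤ ∫ s in Set.Ici (0:ℝ), |h₂ s| := by
      apply setIntegral_mono_set hh₂int.abs
      · exact Filter.Eventually.of_forall fun s => abs_nonneg _
      · exact Filter.Eventually.of_forall fun s hs =>
          (Set.Ioc_subset_Icc_self.trans Set.Icc_subset_Ici_self) hs
    calc K * ‖ψ‖ ^ 2 * ∫ s in Set.Ioc (0:ℝ) t, |h₂ s|
        ≤ K * ‖ψ‖ ^ 2 * ∫ s in Set.Ici (0:ℝ), |h₂ s| := by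
          apply mul_le_mul_of_nonneg_left hmono
          exact mul_nonneg hK.le (pow_nonneg (norm_nonneg _) 2)
      _ = K * (∫ s in Set.Ici (0:ℝ), |h₂ s|) * ‖ψ‖ ^ 2 := by ring
  · rw [intervalIntegral.integral_undef hg, map_zero, norm_zero]
    exact rhs_nn
end
end

section
/- Suppose conditions (I')–(VII') hold and h ∈ 𝒞 ∩ L¹([0,∞)). Then the map H = (H₁, H₂) : 𝒞 × ker(Λ) × ℝ → 𝒞 × ℝᵖ is continuously Fréchet differentiable, and for every ((x,v),ε) its partial Fréchet derivative with respect to (x,v) is the bounded linear map sending (ψ,w) ∈ 𝒞 × ker(Λ) to the pair consisting of the function t ↦ ψ(t) − Φ(t)w − ε ( Φ(t)∫₀ᵗ Φ⁻¹(s)(∂f/∂x)(s,x(s))ψ(s) ds ) and the vector Wᵀ[ ∫₀^∞ (∂g/∂x)(t,x(t))ψ(t) dt − Γ( Φ(·)∫₀· Φ⁻¹(s)(∂f/∂x)(s,x(s))ψ(s) ds ) ]. -/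
open MeasureTheory Set RealInnerProductSpace

noncomputable section

namespace aux17
variable {n : ℕ}

lemma cont_projIci : Continuous (Set.projIci (0:ℝ)) := by
  unfold Set.projIci
  exact Continuous.subtype_mk (continuous_const.max continuous_id) _

lemma cont_comp (x : Cb n) : Continuous fun s : ℝ => x (Set.projIci 0 s) :=
  x.continuous.comp cont_projIci

lemma hasFDerivAt_partial {f : ℝ → Euc n → Euc n}
    (hf : ContDiff ℝ 1 fun q : ℝ × Euc n => f q.1 q.2) (t : ℝ) (y : Euc n) :
    HasFDerivAt (f t) ((fderiv ℝ (fun q : ℝ × Euc n => f q.1 q.2) (t, y)) ∘L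
      ContinuousLinearMap.inr ℝ ℝ (Euc n)) y := by
  have h1 : HasFDerivAt (fun q : ℝ × Euc n => f q.1 q.2)
      (fderiv ℝ (fun q : ℝ × Euc n => f q.1 q.2) (t, y)) (t, y) :=
    (hf.differentiable one_ne_zero (t, y)).hasFDerivAt
  exact h1.comp y (hasFDerivAt_prodMk_right t y)

lemma hasFDerivAt_partial' {f : ℝ → Euc n → Euc n}
    (hf : ContDiff ℝ 1 fun q : ℝ × Euc n => f q.1 q.2) (t : ℝ) (y : Euc n) :
    HasFDerivAt (f t) (fderiv ℝ (f t) y) y :=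
  (hasFDerivAt_partial hf t y).differentiableAt.hasFDerivAt

lemma fderiv_partial {f : ℝ → Euc n → Euc n}
    (hf : ContDiff ℝ 1 fun q : ℝ × Euc n => f q.1 q.2) (t : ℝ) (y : Euc n) :
    fderiv ℝ (f t) y = (fderiv ℝ (fun q : ℝ × Euc n => f q.1 q.2) (t, y)) ∘L
      ContinuousLinearMap.inr ℝ ℝ (Euc n) :=
  (hasFDerivAt_partial hf t y).fderiv

lemma cont_partial {f : ℝ → Euc n → Euc n}
    (hf : ContDiff ℝ 1 fun q : ℝ × Euc n => f q.1 q.2) :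
    Continuous fun q : ℝ × Euc n => fderiv ℝ (f q.1) q.2 := by
  have : (fun q : ℝ × Euc n => fderiv ℝ (f q.1) q.2) = fun q : ℝ × Euc n =>
      (fderiv ℝ (fun q : ℝ × Euc n => f q.1 q.2) q) ∘L ContinuousLinearMap.inr ℝ ℝ (Euc n) := by
    funext q
    exact fderiv_partial hf q.1 q.2
  rw [this]
  exact (hf.continuous_fderiv one_ne_zero).clm_comp continuous_const

lemma cont_f_comp {f : ℝ → Euc n → Euc n}
    (hf : ContDiff ℝ 1 fun q : ℝ × Euc n => f q.1 q.2) (x : Cb n) :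
    Continuous fun s : ℝ => f s (x (Set.projIci 0 s)) :=
  hf.continuous.comp (continuous_id.prodMk (cont_comp x))

lemma cont_df_comp {f : ℝ → Euc n → Euc n}
    (hf : ContDiff ℝ 1 fun q : ℝ × Euc n => f q.1 q.2) (x : Cb n) :
    Continuous fun s : ℝ => fderiv ℝ (f s) (x (Set.projIci 0 s)) :=
  (cont_partial hf).comp (continuous_id.prodMk (cont_comp x))

lemma cont_df_apply {f : ℝ → Euc n → Euc n}
    (hf : ContDiff ℝ 1 fun q : ℝ × Euc n => f q.1 q.2) (x ψ : Cb n) :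
    Continuous fun s : ℝ => fderiv ℝ (f s) (x (Set.projIci 0 s)) (ψ (Set.projIci 0 s)) :=
  (cont_df_comp hf x).clm_apply (cont_comp ψ)

lemma intInt_phiinv {Φinv : ℝ → (Euc n →L[ℝ] Euc n)}
    (hΦinvcont : ContinuousOn Φinv (Set.Ici 0))
    {u : ℝ → Euc n} (hu : Continuous u) {t : ℝ} (ht : 0 ≤ t) :
    IntervalIntegrable (fun s => Φinv s (u s)) volume 0 t := by
  apply ContinuousOn.intervalIntegrable
  rw [Set.uIcc_of_le ht]
  exact (hΦinvcont.mono Set.Icc_subset_Ici_self).clm_apply hu.continuousOn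

lemma exists_unit (hn : 1 ≤ n) : ∃ e : Euc n, ‖e‖ = 1 := by
  refine ⟨EuclideanSpace.single ⟨0, hn⟩ 1, ?_⟩
  rw [EuclideanSpace.norm_single]; norm_num

lemma nonneg_of_bound (hn : 1 ≤ n) {c : ℝ}
    (hb : ∀ x₁ x₂ : Euc n, (0:ℝ) ≤ c * ‖x₁ - x₂‖) : 0 ≤ c := by
  obtain ⟨e, he⟩ := exists_unit hn
  have := hb e 0
  rwa [sub_zero, he, mul_one] at this


section Phi
variable {Φ Φinv : ℝ → (Euc n →L[ℝ] Euc n)}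

lemma phi_inv_cont (hΦcont : ContinuousOn Φ (Set.Ici 0))
    (hΦinv : ∀ t ∈ Set.Ici (0:ℝ), Φ t ∘L Φinv t = 1 ∧ Φinv t ∘L Φ t = 1) :
    ContinuousOn Φinv (Set.Ici 0) := by
  have heq : ∀ s ∈ Set.Ici (0:ℝ), Φinv s = Ring.inverse (Φ s) := by
    intro s hs
    have u : (Euc n →L[ℝ] Euc n)ˣ := ⟨Φ s, Φinv s, (hΦinv s hs).1, (hΦinv s hs).2⟩
    exact (Ring.inverse_unit ⟨Φ s, Φinv s, (hΦinv s hs).1, (hΦinv s hs).2⟩).symm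
  refine ContinuousOn.congr ?_ heq
  intro t ht
  have hu : ContinuousAt (Ring.inverse : (Euc n →L[ℝ] Euc n) → _) (Φ t) :=
    NormedRing.inverse_continuousAt (⟨Φ t, Φinv t, (hΦinv t ht).1, (hΦinv t ht).2⟩ : (Euc n →L[ℝ] Euc n)ˣ)
  exact hu.comp_continuousWithinAt (hΦcont t ht)

lemma phi_inv_zero (hΦ0 : Φ 0 = 1)
    (hΦinv : ∀ t ∈ Set.Ici (0:ℝ), Φ t ∘L Φinv t = 1 ∧ Φinv t ∘L Φ t = 1) :
    Φinv 0 = 1 := by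
  have := (hΦinv 0 Set.self_mem_Ici).2
  rwa [hΦ0, ContinuousLinearMap.one_def, ContinuousLinearMap.comp_id] at this

lemma phi_norm_le {K : ℝ} (hΦ0 : Φ 0 = 1)
    (hΦinv : ∀ t ∈ Set.Ici (0:ℝ), Φ t ∘L Φinv t = 1 ∧ Φinv t ∘L Φ t = 1)
    (hKb : ∀ s t : ℝ, 0 ≤ s → s ≤ t → ‖Φ t ∘L Φinv s‖ ≤ K)
    {t : ℝ} (ht : 0 ≤ t) : ‖Φ t‖ ≤ K := by
  have := hKb 0 t le_rfl ht
  rwa [phi_inv_zero hΦ0 hΦinv, ContinuousLinearMap.one_def, ContinuousLinearMap.comp_id] at this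

-- Part E: the key sup bound
lemma key_bound {K : ℝ} (hK : 0 ≤ K)
    (hΦinvcont : ContinuousOn Φinv (Set.Ici 0))
    (hKb : ∀ s t : ℝ, 0 ≤ s → s ≤ t → ‖Φ t ∘L Φinv s‖ ≤ K)
    {u : ℝ → Euc n} (hu : ContinuousOn u (Set.Ici 0))
    {m : ℝ → ℝ} (hm : IntegrableOn m (Set.Ici 0)) (hm0 : ∀ s ∈ Set.Ici (0:ℝ), 0 ≤ m s)
    (hum : ∀ s ∈ Set.Ici (0:ℝ), ‖u s‖ ≤ m s) {t : ℝ} (ht : 0 ≤ t) :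
    ‖Φ t (∫ s in (0:ℝ)..t, Φinv s (u s))‖ ≤ K * ∫ s in Set.Ici (0:ℝ), m s := by
  have hsub : Set.Icc (0:ℝ) t ⊆ Set.Ici 0 := Set.Icc_subset_Ici_self
  have hcont : ContinuousOn (fun s => Φinv s (u s)) (Set.Icc 0 t) :=
    (hΦinvcont.mono hsub).clm_apply (hu.mono hsub)
  have hint : IntervalIntegrable (fun s => Φinv s (u s)) volume 0 t := by
    apply ContinuousOn.intervalIntegrable
    rwa [Set.uIcc_of_le ht]
  have hKm : IntervalIntegrable (fun s => K * m s) volume 0 t := by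
    apply MeasureTheory.IntegrableOn.intervalIntegrable
    rw [Set.uIcc_of_le ht]
    exact (hm.mono_set hsub).const_mul K
  have hint2 : IntervalIntegrable (fun s => Φ t (Φinv s (u s))) volume 0 t := by
    apply ContinuousOn.intervalIntegrable
    rw [Set.uIcc_of_le ht]
    exact (Φ t).continuous.comp_continuousOn hcont
  rw [← ContinuousLinearMap.intervalIntegral_comp_comm (Φ t) hint]
  calc ‖∫ s in (0:ℝ)..t, Φ t (Φinv s (u s))‖
      ≤ ∫ s in (0:ℝ)..t, ‖Φ t (Φinv s (u s))‖ :=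
        intervalIntegral.norm_integral_le_integral_norm ht
    _ ≤ ∫ s in (0:ℝ)..t, K * m s := by
        apply intervalIntegral.integral_mono_on ht hint2.norm hKm
        intro s hs
        have h1 : ‖Φ t (Φinv s (u s))‖ = ‖(Φ t ∘L Φinv s) (u s)‖ := rfl
        rw [h1]
        calc ‖(Φ t ∘L Φinv s) (u s)‖ ≤ ‖Φ t ∘L Φinv s‖ * ‖u s‖ :=
              ContinuousLinearMap.le_opNorm _ _
          _ ≤ K * m s :=
              mul_le_mul (hKb s t hs.1 hs.2) (hum s hs.1) (norm_nonneg _) hK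
    _ = K * ∫ s in (0:ℝ)..t, m s := intervalIntegral.integral_const_mul K m
    _ ≤ K * ∫ s in Set.Ici (0:ℝ), m s := by
        apply mul_le_mul_of_nonneg_left ?_ hK
        rw [intervalIntegral.integral_of_le ht]
        apply MeasureTheory.setIntegral_mono_set hm
        · exact (ae_restrict_iff' measurableSet_Ici).2 (Filter.Eventually.of_forall hm0)
        · exact Filter.Eventually.of_forall (fun s hs => le_of_lt hs.1)

end Phi


lemma df_norm_bound {f : ℝ → Euc n → Euc n} {h₂ : ℝ → ℝ}
    (hVII' : ∀ t ≥ (0:ℝ), ∀ x₁ x₂ : Euc n,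
      ‖fderiv ℝ (f t) x₁ - fderiv ℝ (f t) x₂‖ ≤ h₂ t * ‖x₁ - x₂‖)
    {s : ℝ} (hs : s ∈ Set.Ici (0:ℝ)) (y : Euc n) :
    ‖fderiv ℝ (f s) y‖ ≤ ‖fderiv ℝ (f s) 0‖ + h₂ s * ‖y‖ := by
  have h := hVII' s hs y 0
  rw [sub_zero] at h
  have h2 := norm_sub_norm_le (fderiv ℝ (f s) y) (fderiv ℝ (f s) 0)
  linarith

-- Taylor / mean value bound
lemma taylor_bound {E : Type*} [NormedAddCommGroup E] [NormedSpace ℝ E]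
    {F : Type*} [NormedAddCommGroup F] [NormedSpace ℝ F]
    {φ : E → F} {Dφ : E → E →L[ℝ] F}
    (hd : ∀ y, HasFDerivAt φ (Dφ y) y) {c : ℝ} (hc : 0 ≤ c)
    (hl : ∀ y₁ y₂ : E, ‖Dφ y₁ - Dφ y₂‖ ≤ c * ‖y₁ - y₂‖) (a b : E) :
    ‖φ b - φ a - Dφ a (b - a)‖ ≤ c * ‖b - a‖ * ‖b - a‖ := by
  have := Convex.norm_image_sub_le_of_norm_hasFDerivWithin_le'
    (f := φ) (f' := Dφ) (φ := Dφ a) (C := c * ‖b - a‖) (s := Metric.closedBall a ‖b - a‖)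
    (fun y _ => (hd y).hasFDerivWithinAt)
    (fun y hy => by
      refine le_trans (hl y a) (mul_le_mul_of_nonneg_left ?_ hc)
      rwa [← dist_eq_norm, ← Metric.mem_closedBall])
    (convex_closedBall a _)
    (Metric.mem_closedBall_self (norm_nonneg _))
    (by rw [Metric.mem_closedBall, dist_eq_norm])
  exact this

-- quadratic remainder bound implies differentiability
lemma hasFDerivAt_of_quadratic {E : Type*} [NormedAddCommGroup E] [NormedSpace ℝ E]
    {F : Type*} [NormedAddCommGroup F] [NormedSpace ℝ F]
    {T : E → F} {L : E →L[ℝ] F} {x : E} {c : ℝ} (hc : 0 ≤ c)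
    (hb : ∀ y, ‖T y - T x - L (y - x)‖ ≤ c * (‖y - x‖ * ‖y - x‖)) :
    HasFDerivAt T L x := by
  rw [hasFDerivAt_iff_isLittleO_nhds_zero]
  rw [Asymptotics.isLittleO_iff]
  intro ε hε
  have hball : ∀ᶠ h : E in nhds 0, ‖h‖ < ε / (c + 1) := by
    have : Metric.ball (0:E) (ε / (c+1)) ∈ nhds (0:E) :=
      Metric.ball_mem_nhds 0 (by positivity)
    filter_upwards [this] with h hh
    simpa [Metric.mem_ball, dist_zero_right] using hh
  filter_upwards [hball] with h hh
  have h1 : ‖T (x + h) - T x - L h‖ ≤ c * (‖h‖ * ‖h‖) := by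
    have := hb (x + h)
    simpa using this
  have h2 : c * (‖h‖ * ‖h‖) ≤ ε * ‖h‖ := by
    have h3 : c * ‖h‖ ≤ ε := by
      rcases eq_or_lt_of_le hc with hc' | hc'
      · rw [← hc']; simpa using le_of_lt hε
      · calc c * ‖h‖ ≤ c * (ε / (c+1)) :=
              mul_le_mul_of_nonneg_left (le_of_lt hh) hc
          _ ≤ ε := by
              rw [div_eq_inv_mul, ← mul_assoc]
              have : c * (c+1)⁻¹ ≤ 1 := by
                rw [mul_inv_le_iff₀ (by linarith)]; linarith
              nlinarith [le_of_lt hε]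
    calc c * (‖h‖ * ‖h‖) = (c * ‖h‖) * ‖h‖ := by ring
      _ ≤ ε * ‖h‖ := mul_le_mul_of_nonneg_right h3 (norm_nonneg _)
  exact le_trans h1 h2

/-- Data bundle for the integral operator part coming from `f`. -/
structure TfData (n : ℕ) where
  Φ : ℝ → (Euc n →L[ℝ] Euc n)
  Φinv : ℝ → (Euc n →L[ℝ] Euc n)
  K : ℝ
  f : ℝ → Euc n → Euc n
  h₂ : ℝ → ℝ
  Tfd : Cb n → Cb n → Cb n
  hΦinvcont : ContinuousOn Φinv (Set.Ici 0)
  hK0 : 0 ≤ K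
  hKb : ∀ s t : ℝ, 0 ≤ s → s ≤ t → ‖Φ t ∘L Φinv s‖ ≤ K
  hf : ContDiff ℝ 1 fun q : ℝ × Euc n => f q.1 q.2
  hIV'b : IntegrableOn (fun t => ‖fderiv ℝ (f t) 0‖) (Set.Ici 0)
  hh₂int : IntegrableOn h₂ (Set.Ici 0)
  hh₂0 : ∀ t ∈ Set.Ici (0:ℝ), 0 ≤ h₂ t
  hVII' : ∀ t ≥ (0:ℝ), ∀ x₁ x₂ : Euc n,
    ‖fderiv ℝ (f t) x₁ - fderiv ℝ (f t) x₂‖ ≤ h₂ t * ‖x₁ - x₂‖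
  hTfd : ∀ (x ψ : Cb n) (t : Set.Ici (0:ℝ)),
    Tfd x ψ t = Φ t (∫ s in (0:ℝ)..(t:ℝ),
      Φinv s (fderiv ℝ (f s) (x (Set.projIci 0 s)) (ψ (Set.projIci 0 s))))

namespace TfData

variable (d : TfData n)

def Mf (x : Cb n) : ℝ := ∫ s in Set.Ici (0:ℝ), (‖fderiv ℝ (d.f s) 0‖ + d.h₂ s * ‖x‖)

def CF : ℝ := d.K * ∫ s in Set.Ici (0:ℝ), d.h₂ s

lemma Mf_int (x : Cb n) :
    IntegrableOn (fun s => ‖fderiv ℝ (d.f s) 0‖ + d.h₂ s * ‖x‖) (Set.Ici 0) :=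
  d.hIV'b.add (d.hh₂int.mul_const _)

lemma Mf_nonneg (x : Cb n) : 0 ≤ d.Mf x :=
  setIntegral_nonneg measurableSet_Ici fun s hs =>
    add_nonneg (norm_nonneg _) (mul_nonneg (d.hh₂0 s hs) (norm_nonneg _))

lemma CF_nonneg : 0 ≤ d.CF :=
  mul_nonneg d.hK0 (setIntegral_nonneg measurableSet_Ici d.hh₂0)

lemma tfd_apply_norm (x ψ : Cb n) (t : Set.Ici (0:ℝ)) :
    ‖d.Tfd x ψ t‖ ≤ (d.K * d.Mf x) * ‖ψ‖ := by
  rw [d.hTfd]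
  have key := key_bound (Φ := d.Φ) (Φinv := d.Φinv) d.hK0 d.hΦinvcont d.hKb
    (u := fun s => fderiv ℝ (d.f s) (x (Set.projIci 0 s)) (ψ (Set.projIci 0 s)))
    ((cont_df_apply d.hf x ψ).continuousOn)
    (m := fun s => (‖fderiv ℝ (d.f s) 0‖ + d.h₂ s * ‖x‖) * ‖ψ‖)
    ((d.Mf_int x).mul_const _)
    (fun s hs => mul_nonneg (add_nonneg (norm_nonneg _)
      (mul_nonneg (d.hh₂0 s hs) (norm_nonneg _))) (norm_nonneg _))
    (fun s hs => by
      calc ‖fderiv ℝ (d.f s) (x (Set.projIci 0 s)) (ψ (Set.projIci 0 s))‖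
          ≤ ‖fderiv ℝ (d.f s) (x (Set.projIci 0 s))‖ * ‖ψ (Set.projIci 0 s)‖ :=
            ContinuousLinearMap.le_opNorm _ _
        _ ≤ (‖fderiv ℝ (d.f s) 0‖ + d.h₂ s * ‖x‖) * ‖ψ‖ := by
            apply mul_le_mul ?_ (BoundedContinuousFunction.norm_coe_le_norm ψ _)
              (norm_nonneg _)
              (add_nonneg (norm_nonneg _) (mul_nonneg (d.hh₂0 s hs) (norm_nonneg _)))
            refine le_trans (df_norm_bound d.hVII' hs _) ?_
            exact add_le_add_right (mul_le_mul_of_nonneg_left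
              (BoundedContinuousFunction.norm_coe_le_norm x _) (d.hh₂0 s hs)) _)
    t.2
  refine le_trans key (le_of_eq ?_)
  rw [MeasureTheory.integral_mul_const]
  show d.K * (d.Mf x * ‖ψ‖) = _
  ring

lemma tfd_norm (x ψ : Cb n) : ‖d.Tfd x ψ‖ ≤ (d.K * d.Mf x) * ‖ψ‖ :=
  (BoundedContinuousFunction.norm_le (mul_nonneg
    (mul_nonneg d.hK0 (d.Mf_nonneg x)) (norm_nonneg _))).2 (d.tfd_apply_norm x ψ)

lemma tfd_add (x ψ₁ ψ₂ : Cb n) : d.Tfd x (ψ₁ + ψ₂) = d.Tfd x ψ₁ + d.Tfd x ψ₂ := by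
  apply BoundedContinuousFunction.ext
  intro t
  rw [BoundedContinuousFunction.add_apply, d.hTfd, d.hTfd, d.hTfd, ← map_add (d.Φ t)]
  congr 1
  rw [← intervalIntegral.integral_add
    (intInt_phiinv d.hΦinvcont (cont_df_apply d.hf x ψ₁) t.2)
    (intInt_phiinv d.hΦinvcont (cont_df_apply d.hf x ψ₂) t.2)]
  congr 1
  funext s
  simp [← map_add]

lemma tfd_smul (x : Cb n) (c : ℝ) (ψ : Cb n) : d.Tfd x (c • ψ) = c • d.Tfd x ψ := by
  apply BoundedContinuousFunction.ext
  intro t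
  rw [BoundedContinuousFunction.smul_apply, d.hTfd, d.hTfd, ← _root_.map_smul (d.Φ t)]
  congr 1
  rw [← intervalIntegral.integral_smul]
  congr 1
  funext s
  rw [BoundedContinuousFunction.smul_apply, _root_.map_smul, _root_.map_smul]

def TfdL (x : Cb n) : Cb n →L[ℝ] Cb n :=
  LinearMap.mkContinuous
    { toFun := d.Tfd x
      map_add' := d.tfd_add x
      map_smul' := d.tfd_smul x }
    ((d.K * d.Mf x)) (d.tfd_norm x)

@[simp] lemma TfdL_apply (x ψ : Cb n) : d.TfdL x ψ = d.Tfd x ψ := rfl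


lemma remainder (Tf : Cb n → Cb n)
    (hTf : ∀ (x : Cb n) (t : Set.Ici (0:ℝ)), Tf x t =
      d.Φ t (∫ s in (0:ℝ)..(t:ℝ), d.Φinv s (d.f s (x (Set.projIci 0 s)))))
    (x y : Cb n) (t : Set.Ici (0:ℝ)) :
    (Tf y - Tf x - d.Tfd x (y - x)) t = d.Φ t (∫ s in (0:ℝ)..(t:ℝ), d.Φinv s
      (d.f s (y (Set.projIci 0 s)) - d.f s (x (Set.projIci 0 s)) -
        fderiv ℝ (d.f s) (x (Set.projIci 0 s))
          (y (Set.projIci 0 s) - x (Set.projIci 0 s)))) := by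
  have h1 : IntervalIntegrable (fun s => d.Φinv s (d.f s (y (Set.projIci 0 s)))) volume 0 t :=
    intInt_phiinv d.hΦinvcont (cont_f_comp d.hf y) t.2
  have h2 : IntervalIntegrable (fun s => d.Φinv s (d.f s (x (Set.projIci 0 s)))) volume 0 t :=
    intInt_phiinv d.hΦinvcont (cont_f_comp d.hf x) t.2
  have h3 : IntervalIntegrable (fun s => d.Φinv s
      (fderiv ℝ (d.f s) (x (Set.projIci 0 s)) ((y - x) (Set.projIci 0 s)))) volume 0 t :=
    intInt_phiinv d.hΦinvcont (cont_df_apply d.hf x (y - x)) t.2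
  rw [BoundedContinuousFunction.sub_apply, BoundedContinuousFunction.sub_apply,
    hTf y t, hTf x t, d.hTfd, ← map_sub (d.Φ t), ← map_sub (d.Φ t)]
  congr 1
  rw [← intervalIntegral.integral_sub h1 h2, ← intervalIntegral.integral_sub (h1.sub h2) h3]
  congr 1
  funext s
  have : (y - x) (Set.projIci 0 s) = y (Set.projIci 0 s) - x (Set.projIci 0 s) := by simp
  rw [← map_sub (d.Φinv s), ← map_sub (d.Φinv s), this]

lemma remainder_norm (Tf : Cb n → Cb n)
    (hTf : ∀ (x : Cb n) (t : Set.Ici (0:ℝ)), Tf x t =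
      d.Φ t (∫ s in (0:ℝ)..(t:ℝ), d.Φinv s (d.f s (x (Set.projIci 0 s)))))
    (x y : Cb n) :
    ‖Tf y - Tf x - d.TfdL x (y - x)‖ ≤ d.CF * (‖y - x‖ * ‖y - x‖) := by
  apply (BoundedContinuousFunction.norm_le
    (mul_nonneg d.CF_nonneg (mul_nonneg (norm_nonneg _) (norm_nonneg _)))).2
  intro t
  have heq := d.remainder Tf hTf x y t
  rw [show d.TfdL x (y - x) = d.Tfd x (y - x) from rfl, heq]
  have key := key_bound (Φ := d.Φ) (Φinv := d.Φinv) d.hK0 d.hΦinvcont d.hKb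
    (u := fun s => d.f s (y (Set.projIci 0 s)) - d.f s (x (Set.projIci 0 s)) -
      fderiv ℝ (d.f s) (x (Set.projIci 0 s)) (y (Set.projIci 0 s) - x (Set.projIci 0 s)))
    (Continuous.continuousOn (by
      exact ((cont_f_comp d.hf y).sub (cont_f_comp d.hf x)).sub
        ((cont_df_comp d.hf x).clm_apply ((cont_comp y).sub (cont_comp x)))))
    (m := fun s => d.h₂ s * (‖y - x‖ * ‖y - x‖))
    (d.hh₂int.mul_const _)
    (fun s hs => mul_nonneg (d.hh₂0 s hs) (mul_nonneg (norm_nonneg _) (norm_nonneg _)))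
    (fun s hs => by
      have htb := taylor_bound (φ := d.f s) (Dφ := fun y => fderiv ℝ (d.f s) y)
        (hasFDerivAt_partial' d.hf s) (d.hh₂0 s hs) (d.hVII' s hs)
        (x (Set.projIci 0 s)) (y (Set.projIci 0 s))
      refine le_trans htb ?_
      have hle : ‖y (Set.projIci 0 s) - x (Set.projIci 0 s)‖ ≤ ‖y - x‖ := by
        have := BoundedContinuousFunction.norm_coe_le_norm (y - x) (Set.projIci 0 s)
        simpa using this
      have h0 := norm_nonneg (y (Set.projIci 0 s) - x (Set.projIci 0 s))
      calc d.h₂ s * ‖y (Set.projIci 0 s) - x (Set.projIci 0 s)‖ *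
            ‖y (Set.projIci 0 s) - x (Set.projIci 0 s)‖
          ≤ (d.h₂ s * ‖y - x‖) * ‖y - x‖ :=
            mul_le_mul (mul_le_mul_of_nonneg_left hle (d.hh₂0 s hs)) hle h0
              (mul_nonneg (d.hh₂0 s hs) (norm_nonneg _))
        _ = d.h₂ s * (‖y - x‖ * ‖y - x‖) := mul_assoc _ _ _)
    t.2
  refine le_trans key (le_of_eq ?_)
  rw [MeasureTheory.integral_mul_const]
  show d.K * ((∫ s in Set.Ici (0:ℝ), d.h₂ s) * _) = _
  rw [TfData.CF]
  ring

lemma tf_hasFDerivAt (Tf : Cb n → Cb n)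
    (hTf : ∀ (x : Cb n) (t : Set.Ici (0:ℝ)), Tf x t =
      d.Φ t (∫ s in (0:ℝ)..(t:ℝ), d.Φinv s (d.f s (x (Set.projIci 0 s)))))
    (x : Cb n) : HasFDerivAt Tf (d.TfdL x) x :=
  hasFDerivAt_of_quadratic d.CF_nonneg (fun y => d.remainder_norm Tf hTf x y)

lemma tfdL_lip (x y : Cb n) : ‖d.TfdL x - d.TfdL y‖ ≤ d.CF * ‖x - y‖ := by
  apply ContinuousLinearMap.opNorm_le_bound _ (mul_nonneg d.CF_nonneg (norm_nonneg _))
  intro ψ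
  rw [ContinuousLinearMap.sub_apply, d.TfdL_apply, d.TfdL_apply]
  apply (BoundedContinuousFunction.norm_le
    (mul_nonneg (mul_nonneg d.CF_nonneg (norm_nonneg _)) (norm_nonneg _))).2
  intro t
  have h1 : IntervalIntegrable (fun s => d.Φinv s
      (fderiv ℝ (d.f s) (x (Set.projIci 0 s)) (ψ (Set.projIci 0 s)))) volume 0 t :=
    intInt_phiinv d.hΦinvcont (cont_df_apply d.hf x ψ) t.2
  have h2 : IntervalIntegrable (fun s => d.Φinv s
      (fderiv ℝ (d.f s) (y (Set.projIci 0 s)) (ψ (Set.projIci 0 s)))) volume 0 t :=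
    intInt_phiinv d.hΦinvcont (cont_df_apply d.hf y ψ) t.2
  have heq : (d.Tfd x ψ - d.Tfd y ψ) t = d.Φ t (∫ s in (0:ℝ)..(t:ℝ), d.Φinv s
      ((fderiv ℝ (d.f s) (x (Set.projIci 0 s)) -
        fderiv ℝ (d.f s) (y (Set.projIci 0 s))) (ψ (Set.projIci 0 s)))) := by
    rw [BoundedContinuousFunction.sub_apply, d.hTfd, d.hTfd, ← map_sub (d.Φ t)]
    congr 1
    rw [← intervalIntegral.integral_sub h1 h2]
    congr 1
    funext s
    rw [← map_sub (d.Φinv s), ContinuousLinearMap.sub_apply]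
  rw [heq]
  have key := key_bound (Φ := d.Φ) (Φinv := d.Φinv) d.hK0 d.hΦinvcont d.hKb
    (u := fun s => (fderiv ℝ (d.f s) (x (Set.projIci 0 s)) -
        fderiv ℝ (d.f s) (y (Set.projIci 0 s))) (ψ (Set.projIci 0 s)))
    (Continuous.continuousOn (by
      exact ((cont_df_comp d.hf x).sub (cont_df_comp d.hf y)).clm_apply (cont_comp ψ)))
    (m := fun s => d.h₂ s * (‖x - y‖ * ‖ψ‖))
    (d.hh₂int.mul_const _)
    (fun s hs => mul_nonneg (d.hh₂0 s hs) (mul_nonneg (norm_nonneg _) (norm_nonneg _)))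
    (fun s hs => by
      have hop := ContinuousLinearMap.le_opNorm
        (fderiv ℝ (d.f s) (x (Set.projIci 0 s)) -
          fderiv ℝ (d.f s) (y (Set.projIci 0 s))) (ψ (Set.projIci 0 s))
      have hlip := d.hVII' s hs (x (Set.projIci 0 s)) (y (Set.projIci 0 s))
      have hle : ‖x (Set.projIci 0 s) - y (Set.projIci 0 s)‖ ≤ ‖x - y‖ := by
        have := BoundedContinuousFunction.norm_coe_le_norm (x - y) (Set.projIci 0 s)
        simpa using this
      have hψ := BoundedContinuousFunction.norm_coe_le_norm ψ (Set.projIci 0 s)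
      calc ‖(fderiv ℝ (d.f s) (x (Set.projIci 0 s)) -
            fderiv ℝ (d.f s) (y (Set.projIci 0 s))) (ψ (Set.projIci 0 s))‖
          ≤ ‖fderiv ℝ (d.f s) (x (Set.projIci 0 s)) -
            fderiv ℝ (d.f s) (y (Set.projIci 0 s))‖ * ‖ψ (Set.projIci 0 s)‖ := hop
        _ ≤ (d.h₂ s * ‖x - y‖) * ‖ψ‖ :=
            mul_le_mul (le_trans hlip (mul_le_mul_of_nonneg_left hle (d.hh₂0 s hs))) hψ
              (norm_nonneg _) (mul_nonneg (d.hh₂0 s hs) (norm_nonneg _))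
        _ = d.h₂ s * (‖x - y‖ * ‖ψ‖) := mul_assoc _ _ _)
    t.2
  refine le_trans key (le_of_eq ?_)
  rw [MeasureTheory.integral_mul_const]
  show d.K * ((∫ s in Set.Ici (0:ℝ), d.h₂ s) * _) = _
  rw [TfData.CF]
  ring

lemma tfdL_cont : Continuous fun x : Cb n => d.TfdL x := by
  have h : LipschitzWith d.CF.toNNReal (fun x : Cb n => d.TfdL x) := by
    apply LipschitzWith.of_dist_le_mul
    intro x y
    simp only [dist_eq_norm]
    rw [Real.coe_toNNReal _ d.CF_nonneg]
    exact d.tfdL_lip x y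
  exact h.continuous

lemma tf_contDiff (Tf : Cb n → Cb n)
    (hTf : ∀ (x : Cb n) (t : Set.Ici (0:ℝ)), Tf x t =
      d.Φ t (∫ s in (0:ℝ)..(t:ℝ), d.Φinv s (d.f s (x (Set.projIci 0 s))))) :
    ContDiff ℝ 1 Tf := by
  rw [contDiff_one_iff_fderiv]
  refine ⟨fun x => (d.tf_hasFDerivAt Tf hTf x).differentiableAt, ?_⟩
  have : (fderiv ℝ Tf) = fun x => d.TfdL x :=
    funext fun x => (d.tf_hasFDerivAt Tf hTf x).fderiv
  rw [this]
  exact d.tfdL_cont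

end TfData

/-- Data bundle for the integral functional coming from `g`. -/
structure GData (n : ℕ) where
  g : ℝ → Euc n → Euc n
  sfun : ℝ → ℝ
  hg : ContDiff ℝ 1 fun q : ℝ × Euc n => g q.1 q.2
  hII'b : IntegrableOn (fun t => ‖fderiv ℝ (g t) 0‖) (Set.Ici 0)
  hsint : IntegrableOn sfun (Set.Ici 0)
  hs0 : ∀ t ∈ Set.Ici (0:ℝ), 0 ≤ sfun t
  hV' : ∀ t ≥ (0:ℝ), ∀ x₁ x₂ : Euc n,
    ‖fderiv ℝ (g t) x₁ - fderiv ℝ (g t) x₂‖ ≤ sfun t * ‖x₁ - x₂‖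
  hIII' : ∀ x : Cb n, IntegrableOn (fun t => g t (x (Set.projIci 0 t))) (Set.Ici 0)

namespace GData

variable (e : GData n)

def Gmap (x : Cb n) : Euc n := ∫ t in Set.Ici (0:ℝ), e.g t (x (Set.projIci 0 t))

def MG (x : Cb n) : ℝ := ∫ t in Set.Ici (0:ℝ), (‖fderiv ℝ (e.g t) 0‖ + e.sfun t * ‖x‖)

def CG : ℝ := ∫ t in Set.Ici (0:ℝ), e.sfun t

lemma CG_nonneg : 0 ≤ e.CG := setIntegral_nonneg measurableSet_Ici e.hs0

lemma MG_nonneg (x : Cb n) : 0 ≤ e.MG x :=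
  setIntegral_nonneg measurableSet_Ici fun s hs =>
    add_nonneg (norm_nonneg _) (mul_nonneg (e.hs0 s hs) (norm_nonneg _))

lemma dg_bound (x ψ : Cb n) {t : ℝ} (ht : t ∈ Set.Ici (0:ℝ)) :
    ‖fderiv ℝ (e.g t) (x (Set.projIci 0 t)) (ψ (Set.projIci 0 t))‖ ≤
      (‖fderiv ℝ (e.g t) 0‖ + e.sfun t * ‖x‖) * ‖ψ‖ := by
  calc ‖fderiv ℝ (e.g t) (x (Set.projIci 0 t)) (ψ (Set.projIci 0 t))‖
      ≤ ‖fderiv ℝ (e.g t) (x (Set.projIci 0 t))‖ * ‖ψ (Set.projIci 0 t)‖ :=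
        ContinuousLinearMap.le_opNorm _ _
    _ ≤ (‖fderiv ℝ (e.g t) 0‖ + e.sfun t * ‖x‖) * ‖ψ‖ := by
        apply mul_le_mul ?_ (BoundedContinuousFunction.norm_coe_le_norm ψ _)
          (norm_nonneg _)
          (add_nonneg (norm_nonneg _) (mul_nonneg (e.hs0 t ht) (norm_nonneg _)))
        refine le_trans (df_norm_bound e.hV' ht _) ?_
        exact add_le_add_right (mul_le_mul_of_nonneg_left
          (BoundedContinuousFunction.norm_coe_le_norm x _) (e.hs0 t ht)) _

lemma MG_int (x : Cb n) :
    IntegrableOn (fun t => ‖fderiv ℝ (e.g t) 0‖ + e.sfun t * ‖x‖) (Set.Ici 0) :=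
  e.hII'b.add (e.hsint.mul_const _)

lemma int_dg (x ψ : Cb n) : IntegrableOn
    (fun t => fderiv ℝ (e.g t) (x (Set.projIci 0 t)) (ψ (Set.projIci 0 t))) (Set.Ici 0) := by
  apply Integrable.mono' ((e.MG_int x).mul_const ‖ψ‖)
  · exact ((cont_df_apply e.hg x ψ).continuousOn).aestronglyMeasurable measurableSet_Ici
  · exact (ae_restrict_iff' measurableSet_Ici).2
      (Filter.Eventually.of_forall (fun t ht => e.dg_bound x ψ ht))

lemma dg_add (x ψ₁ ψ₂ : Cb n) :
    (∫ t in Set.Ici (0:ℝ), fderiv ℝ (e.g t) (x (Set.projIci 0 t)) ((ψ₁ + ψ₂) (Set.projIci 0 t)))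
      = (∫ t in Set.Ici (0:ℝ), fderiv ℝ (e.g t) (x (Set.projIci 0 t)) (ψ₁ (Set.projIci 0 t)))
      + ∫ t in Set.Ici (0:ℝ), fderiv ℝ (e.g t) (x (Set.projIci 0 t)) (ψ₂ (Set.projIci 0 t)) := by
  rw [← integral_add (e.int_dg x ψ₁) (e.int_dg x ψ₂)]
  congr 1
  funext t
  simp [← map_add]

lemma dg_smul (x : Cb n) (c : ℝ) (ψ : Cb n) :
    (∫ t in Set.Ici (0:ℝ), fderiv ℝ (e.g t) (x (Set.projIci 0 t)) ((c • ψ) (Set.projIci 0 t)))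
      = c • ∫ t in Set.Ici (0:ℝ), fderiv ℝ (e.g t) (x (Set.projIci 0 t)) (ψ (Set.projIci 0 t)) := by
  rw [← integral_smul]
  congr 1
  funext t
  rw [BoundedContinuousFunction.smul_apply, _root_.map_smul]

lemma dg_norm (x ψ : Cb n) :
    ‖∫ t in Set.Ici (0:ℝ), fderiv ℝ (e.g t) (x (Set.projIci 0 t)) (ψ (Set.projIci 0 t))‖
      ≤ e.MG x * ‖ψ‖ := by
  refine le_trans (MeasureTheory.norm_integral_le_of_norm_le ((e.MG_int x).mul_const ‖ψ‖)
    ((ae_restrict_iff' measurableSet_Ici).2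
      (Filter.Eventually.of_forall (fun t ht => e.dg_bound x ψ ht)))) (le_of_eq ?_)
  rw [MeasureTheory.integral_mul_const]
  rfl

def DG (x : Cb n) : Cb n →L[ℝ] Euc n :=
  LinearMap.mkContinuous
    { toFun := fun ψ => ∫ t in Set.Ici (0:ℝ),
        fderiv ℝ (e.g t) (x (Set.projIci 0 t)) (ψ (Set.projIci 0 t))
      map_add' := e.dg_add x
      map_smul' := e.dg_smul x }
    (e.MG x) (e.dg_norm x)

@[simp] lemma DG_apply (x ψ : Cb n) : e.DG x ψ =
    ∫ t in Set.Ici (0:ℝ), fderiv ℝ (e.g t) (x (Set.projIci 0 t)) (ψ (Set.projIci 0 t)) := rfl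

lemma g_remainder_norm (x y : Cb n) :
    ‖e.Gmap y - e.Gmap x - e.DG x (y - x)‖ ≤ e.CG * (‖y - x‖ * ‖y - x‖) := by
  have hsub : ∀ t : ℝ, (y - x) (Set.projIci 0 t) =
      y (Set.projIci 0 t) - x (Set.projIci 0 t) := fun t => by simp
  have heq : e.Gmap y - e.Gmap x - e.DG x (y - x) = ∫ t in Set.Ici (0:ℝ),
      (e.g t (y (Set.projIci 0 t)) - e.g t (x (Set.projIci 0 t)) -
        fderiv ℝ (e.g t) (x (Set.projIci 0 t))
          (y (Set.projIci 0 t) - x (Set.projIci 0 t))) := by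
    have hyx : IntegrableOn (fun t => e.g t (y (Set.projIci 0 t)) -
        e.g t (x (Set.projIci 0 t))) (Set.Ici 0) := (e.hIII' y).sub (e.hIII' x)
    rw [GData.Gmap, GData.Gmap, DG_apply,
      ← integral_sub (e.hIII' y) (e.hIII' x),
      ← integral_sub hyx (e.int_dg x (y - x))]
    exact integral_congr_ae (Filter.Eventually.of_forall fun t => by simp only []; rw [hsub t])
  rw [heq]
  have hintrem : IntegrableOn (fun t => e.sfun t * (‖y - x‖ * ‖y - x‖)) (Set.Ici 0) :=
    e.hsint.mul_const _
  refine le_trans (MeasureTheory.norm_integral_le_of_norm_le hintrem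
    ((ae_restrict_iff' measurableSet_Ici).2 (Filter.Eventually.of_forall (fun t ht => ?_))))
    (le_of_eq ?_)
  · have htb := taylor_bound (φ := e.g t) (Dφ := fun y => fderiv ℝ (e.g t) y)
      (hasFDerivAt_partial' e.hg t) (e.hs0 t ht) (e.hV' t ht)
      (x (Set.projIci 0 t)) (y (Set.projIci 0 t))
    refine le_trans htb ?_
    have hle : ‖y (Set.projIci 0 t) - x (Set.projIci 0 t)‖ ≤ ‖y - x‖ := by
      have := BoundedContinuousFunction.norm_coe_le_norm (y - x) (Set.projIci 0 t)
      simpa using this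
    have h0 := norm_nonneg (y (Set.projIci 0 t) - x (Set.projIci 0 t))
    calc e.sfun t * ‖y (Set.projIci 0 t) - x (Set.projIci 0 t)‖ *
          ‖y (Set.projIci 0 t) - x (Set.projIci 0 t)‖
        ≤ (e.sfun t * ‖y - x‖) * ‖y - x‖ :=
          mul_le_mul (mul_le_mul_of_nonneg_left hle (e.hs0 t ht)) hle h0
            (mul_nonneg (e.hs0 t ht) (norm_nonneg _))
      _ = e.sfun t * (‖y - x‖ * ‖y - x‖) := mul_assoc _ _ _
  · rw [MeasureTheory.integral_mul_const]
    rfl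

lemma g_hasFDerivAt (x : Cb n) : HasFDerivAt e.Gmap (e.DG x) x :=
  hasFDerivAt_of_quadratic e.CG_nonneg (fun y => e.g_remainder_norm x y)

lemma dg_lip (x y : Cb n) : ‖e.DG x - e.DG y‖ ≤ e.CG * ‖x - y‖ := by
  apply ContinuousLinearMap.opNorm_le_bound _ (mul_nonneg e.CG_nonneg (norm_nonneg _))
  intro ψ
  rw [ContinuousLinearMap.sub_apply, e.DG_apply, e.DG_apply,
    ← integral_sub (e.int_dg x ψ) (e.int_dg y ψ)]
  have hintrem : IntegrableOn (fun t => e.sfun t * (‖x - y‖ * ‖ψ‖)) (Set.Ici 0) :=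
    e.hsint.mul_const _
  refine le_trans (MeasureTheory.norm_integral_le_of_norm_le hintrem
    ((ae_restrict_iff' measurableSet_Ici).2 (Filter.Eventually.of_forall (fun t ht => ?_))))
    (le_of_eq ?_)
  · have hop := ContinuousLinearMap.le_opNorm
      (fderiv ℝ (e.g t) (x (Set.projIci 0 t)) - fderiv ℝ (e.g t) (y (Set.projIci 0 t)))
      (ψ (Set.projIci 0 t))
    have hlip := e.hV' t ht (x (Set.projIci 0 t)) (y (Set.projIci 0 t))
    have hle : ‖x (Set.projIci 0 t) - y (Set.projIci 0 t)‖ ≤ ‖x - y‖ := by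
      have := BoundedContinuousFunction.norm_coe_le_norm (x - y) (Set.projIci 0 t)
      simpa using this
    have hψ := BoundedContinuousFunction.norm_coe_le_norm ψ (Set.projIci 0 t)
    calc ‖fderiv ℝ (e.g t) (x (Set.projIci 0 t)) (ψ (Set.projIci 0 t)) -
          fderiv ℝ (e.g t) (y (Set.projIci 0 t)) (ψ (Set.projIci 0 t))‖
        = ‖(fderiv ℝ (e.g t) (x (Set.projIci 0 t)) -
            fderiv ℝ (e.g t) (y (Set.projIci 0 t))) (ψ (Set.projIci 0 t))‖ := by
          rw [ContinuousLinearMap.sub_apply]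
      _ ≤ ‖fderiv ℝ (e.g t) (x (Set.projIci 0 t)) -
            fderiv ℝ (e.g t) (y (Set.projIci 0 t))‖ * ‖ψ (Set.projIci 0 t)‖ := hop
      _ ≤ (e.sfun t * ‖x - y‖) * ‖ψ‖ :=
          mul_le_mul (le_trans hlip (mul_le_mul_of_nonneg_left hle (e.hs0 t ht))) hψ
            (norm_nonneg _) (mul_nonneg (e.hs0 t ht) (norm_nonneg _))
      _ = e.sfun t * (‖x - y‖ * ‖ψ‖) := mul_assoc _ _ _
  · rw [MeasureTheory.integral_mul_const]
    show (∫ t in Set.Ici (0:ℝ), e.sfun t) * (‖x - y‖ * ‖ψ‖) = _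
    rw [GData.CG]
    ring

lemma dg_cont : Continuous fun x : Cb n => e.DG x := by
  have h : LipschitzWith e.CG.toNNReal (fun x : Cb n => e.DG x) := by
    apply LipschitzWith.of_dist_le_mul
    intro x y
    simp only [dist_eq_norm]
    rw [Real.coe_toNNReal _ e.CG_nonneg]
    exact e.dg_lip x y
  exact h.continuous

lemma g_contDiff : ContDiff ℝ 1 e.Gmap := by
  rw [contDiff_one_iff_fderiv]
  refine ⟨fun x => (e.g_hasFDerivAt x).differentiableAt, ?_⟩
  have : (fderiv ℝ e.Gmap) = fun x => e.DG x :=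
    funext fun x => (e.g_hasFDerivAt x).fderiv
  rw [this]
  exact e.dg_cont

end GData


section PhiCL

variable {Φ : ℝ → (Euc n →L[ℝ] Euc n)} {K : ℝ}

def PhiCL (Φ : ℝ → (Euc n →L[ℝ] Euc n)) (ΦC : Euc n → Cb n)
    (hΦC : ∀ (v : Euc n) (t : Set.Ici (0:ℝ)), ΦC v t = Φ t v)
    (K : ℝ) (hK0 : 0 ≤ K) (hnorm : ∀ t : ℝ, 0 ≤ t → ‖Φ t‖ ≤ K) : Euc n →L[ℝ] Cb n :=
  LinearMap.mkContinuous
    { toFun := ΦC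
      map_add' := fun v w => by
        apply BoundedContinuousFunction.ext
        intro t
        rw [BoundedContinuousFunction.add_apply, hΦC, hΦC, hΦC, map_add]
      map_smul' := fun c v => by
        apply BoundedContinuousFunction.ext
        intro t
        rw [BoundedContinuousFunction.smul_apply, hΦC, hΦC, _root_.map_smul]
        rfl }
    K
    (fun v => by
      apply (BoundedContinuousFunction.norm_le (mul_nonneg hK0 (norm_nonneg _))).2
      intro t
      show ‖ΦC v t‖ ≤ K * ‖v‖
      rw [hΦC]
      exact le_trans (ContinuousLinearMap.le_opNorm _ _)
        (mul_le_mul_of_nonneg_right (hnorm t t.2) (norm_nonneg _)))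

@[simp] lemma PhiCL_apply (ΦC : Euc n → Cb n)
    (hΦC : ∀ (v : Euc n) (t : Set.Ici (0:ℝ)), ΦC v t = Φ t v)
    (hK0 : 0 ≤ K) (hnorm : ∀ t : ℝ, 0 ≤ t → ‖Φ t‖ ≤ K) (v : Euc n) :
    PhiCL Φ ΦC hΦC K hK0 hnorm v = ΦC v := rfl

end PhiCL

end aux17

set_option maxHeartbeats 2000000 in
theorem stmt_17 {n : ℕ} (hn : 1 ≤ n)
    -- the coefficient matrix `A`, the fundamental matrix `Φ` and its pointwise inverse `Φinv`
    (A Φ Φinv : ℝ → (Euc n →L[ℝ] Euc n))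
    (hA : ContinuousOn A (Set.Ici 0))
    (hΦ0 : Φ 0 = 1)
    (hΦode : ∀ t ∈ Set.Ici (0:ℝ), HasDerivWithinAt Φ (A t ∘L Φ t) (Set.Ici 0) t)
    (hΦinv : ∀ t ∈ Set.Ici (0:ℝ), Φ t ∘L Φinv t = 1 ∧ Φinv t ∘L Φ t = 1)
    -- condition (I'): `‖Φ(t)Φ⁻¹(s)‖ ≤ K` for all `t ≥ s ≥ 0`
    (K : ℝ) (hK : 0 < K)
    (hKb : ∀ s t : ℝ, 0 ≤ s → s ≤ t → ‖Φ t ∘L Φinv s‖ ≤ K)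
    -- the bounded linear boundary operator `Γ` and the matrix `Λ`, whose columns are `Γ(Φᵢ)`
    (Γ : Cb n →L[ℝ] Euc n)
    (ΦC : Euc n → Cb n) (hΦC : ∀ (v : Euc n) (t : Set.Ici (0:ℝ)), ΦC v t = Φ t v)
    (Λ : Euc n →L[ℝ] Euc n) (hΛ : ∀ v, Λ v = Γ (ΦC v))
    -- `p = dim ker Λ ≥ 1`, the columns of `W` form a basis of `ker (Λᵀ)`, and `Wᵀ` is the
    -- induced linear map `ℝⁿ → ℝᵖ`, `(Wᵀz)ᵢ = ⟪Wᵢ, z⟫`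
    (p : ℕ) (hp : 1 ≤ p)
    (hfinrank : Module.finrank ℝ (LinearMap.ker (Λ : Euc n →ₗ[ℝ] Euc n)) = p)
    (W : Fin p → Euc n)
    (hWmem : ∀ i, W i ∈ LinearMap.ker (ContinuousLinearMap.adjoint Λ : Euc n →ₗ[ℝ] Euc n))
    (hWli : LinearIndependent ℝ W)
    (hWspan : Submodule.span ℝ (Set.range W) = LinearMap.ker (ContinuousLinearMap.adjoint Λ : Euc n →ₗ[ℝ] Euc n))
    (WT : Euc n →L[ℝ] Euc p) (hWT : ∀ z i, WT z i = ⟪W i, z⟫)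
    -- `f` and `g` are continuously differentiable
    (f g : ℝ → Euc n → Euc n)
    (hf : ContDiff ℝ 1 fun q : ℝ × Euc n => f q.1 q.2)
    (hg : ContDiff ℝ 1 fun q : ℝ × Euc n => g q.1 q.2)
    -- conditions (II')–(V')
    (hII'a : UniformContinuousOn (fun q : ℝ × Euc n => fderiv ℝ (g q.1) q.2)
      (Set.Ici 0 ×ˢ (Set.univ : Set (Euc n))))
    (hII'b : IntegrableOn (fun t => ‖fderiv ℝ (g t) 0‖) (Set.Ici 0))
    (hIII' : ∀ x : Cb n, IntegrableOn (fun t => g t (x (Set.projIci 0 t))) (Set.Ici 0))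
    (hIV'a : UniformContinuousOn (fun q : ℝ × Euc n => fderiv ℝ (f q.1) q.2)
      (Set.Ici 0 ×ˢ (Set.univ : Set (Euc n))))
    (hIV'b : IntegrableOn (fun t => ‖fderiv ℝ (f t) 0‖) (Set.Ici 0))
    (hV' : ∃ sfun : ℝ → ℝ, IntegrableOn sfun (Set.Ici 0) ∧
      ∀ t ≥ (0:ℝ), ∀ x₁ x₂ : Euc n,
        ‖fderiv ℝ (g t) x₁ - fderiv ℝ (g t) x₂‖ ≤ sfun t * ‖x₁ - x₂‖)
    -- condition (VI')
    (h₁ : ℝ → ℝ) (hh₁int : IntegrableOn h₁ (Set.Ici 0))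
    (hVI' : ∀ S : Set (Euc n), IsCompact S → ∃ C : ℝ,
      (∀ t ≥ (0:ℝ), ∀ x ∈ S, ‖f t x‖ ≤ C * h₁ t) ∧
      (∀ t ≥ (0:ℝ), ∀ x₁ ∈ S, ∀ x₂ ∈ S, ‖f t x₁ - f t x₂‖ ≤ h₁ t * ‖x₁ - x₂‖))
    -- condition (VII')
    (h₂ : ℝ → ℝ) (hh₂int : IntegrableOn h₂ (Set.Ici 0))
    (hVII' : ∀ t ≥ (0:ℝ), ∀ x₁ x₂ : Euc n,
      ‖fderiv ℝ (f t) x₁ - fderiv ℝ (f t) x₂‖ ≤ h₂ t * ‖x₁ - x₂‖)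
    -- `h ∈ 𝒞 ∩ L¹[0,∞)`
    (h : Cb n) (hhint : IntegrableOn (fun t => h (Set.projIci 0 t)) (Set.Ici 0))
    -- `Tf x = Φ(·)∫₀· Φ⁻¹(s) f(s,x(s)) ds ∈ 𝒞` and
    -- `Tfd x ψ = Φ(·)∫₀· Φ⁻¹(s) (∂f/∂x)(s,x(s))ψ(s) ds ∈ 𝒞`
    (Tf : Cb n → Cb n)
    (hTf : ∀ (x : Cb n) (t : Set.Ici (0:ℝ)),
      Tf x t = Φ t (∫ s in (0:ℝ)..(t:ℝ), Φinv s (f s (x (Set.projIci 0 s)))))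
    (Tfd : Cb n → Cb n → Cb n)
    (hTfd : ∀ (x ψ : Cb n) (t : Set.Ici (0:ℝ)),
      Tfd x ψ t = Φ t (∫ s in (0:ℝ)..(t:ℝ),
        Φinv s (fderiv ℝ (f s) (x (Set.projIci 0 s)) (ψ (Set.projIci 0 s)))))
    -- the maps `H₁ : 𝒞 × ker(Λ) × ℝ → 𝒞` and `H₂ : 𝒞 × ker(Λ) × ℝ → ℝᵖ`
    (H₁ : (Cb n × ↥(LinearMap.ker (Λ : Euc n →ₗ[ℝ] Euc n))) × ℝ → Cb n)
    (hH₁ : ∀ (x : Cb n) (v : ↥(LinearMap.ker (Λ : Euc n →ₗ[ℝ] Euc n))) (ε : ℝ) (t : Set.Ici (0:ℝ)),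
      H₁ ((x, v), ε) t = x t - Φ t (v : Euc n) -
        Φ t (∫ s in (0:ℝ)..(t:ℝ),
          Φinv s (h (Set.projIci 0 s) + ε • f s (x (Set.projIci 0 s)))))
    (H₂ : (Cb n × ↥(LinearMap.ker (Λ : Euc n →ₗ[ℝ] Euc n))) × ℝ → Euc p)
    (hH₂ : ∀ (x : Cb n) (v : ↥(LinearMap.ker (Λ : Euc n →ₗ[ℝ] Euc n))) (ε : ℝ),
      H₂ ((x, v), ε) =
        WT ((∫ t in Set.Ici (0:ℝ), g t (x (Set.projIci 0 t))) - Γ (Tf x))) :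
    -- `H = (H₁,H₂)` is continuously Fréchet differentiable and its partial derivative in `(x,v)`
    -- is the stated bounded linear map
    ContDiff ℝ 1 (fun q => (H₁ q, H₂ q)) ∧
      ∀ (x : Cb n) (v : ↥(LinearMap.ker (Λ : Euc n →ₗ[ℝ] Euc n))) (ε : ℝ)
        (D : (Cb n × ↥(LinearMap.ker (Λ : Euc n →ₗ[ℝ] Euc n))) →L[ℝ] (Cb n × Euc p)),
        (∀ (ψ : Cb n) (w : ↥(LinearMap.ker (Λ : Euc n →ₗ[ℝ] Euc n))),
          (∀ t : Set.Ici (0:ℝ),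
            (D (ψ, w)).1 t = ψ t - Φ t (w : Euc n) -
              ε • Φ t (∫ s in (0:ℝ)..(t:ℝ),
                Φinv s (fderiv ℝ (f s) (x (Set.projIci 0 s)) (ψ (Set.projIci 0 s))))) ∧
          (D (ψ, w)).2 =
            WT ((∫ t in Set.Ici (0:ℝ),
                fderiv ℝ (g t) (x (Set.projIci 0 t)) (ψ (Set.projIci 0 t))) -
              Γ (Tfd x ψ))) →
        HasFDerivAt (fun q => (H₁ (q, ε), H₂ (q, ε))) D (x, v) := by
  classical
  obtain ⟨sfun, hsint, hsfunlip⟩ := hV'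
  have hh₂0 : ∀ t ∈ Set.Ici (0:ℝ), 0 ≤ h₂ t := fun t ht =>
    aux17.nonneg_of_bound hn (fun x₁ x₂ => le_trans (norm_nonneg _) (hVII' t ht x₁ x₂))
  have hs0 : ∀ t ∈ Set.Ici (0:ℝ), 0 ≤ sfun t := fun t ht =>
    aux17.nonneg_of_bound hn (fun x₁ x₂ => le_trans (norm_nonneg _) (hsfunlip t ht x₁ x₂))
  have hK0 : 0 ≤ K := le_of_lt hK
  have hΦcont : ContinuousOn Φ (Set.Ici 0) := fun t ht => (hΦode t ht).continuousWithinAt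
  have hΦinvcont : ContinuousOn Φinv (Set.Ici 0) := aux17.phi_inv_cont hΦcont hΦinv
  have hΦnorm : ∀ t : ℝ, 0 ≤ t → ‖Φ t‖ ≤ K := fun t ht =>
    aux17.phi_norm_le hΦ0 hΦinv hKb ht
  let d : aux17.TfData n :=
    ⟨Φ, Φinv, K, f, h₂, Tfd, hΦinvcont, hK0, hKb, hf, hIV'b, hh₂int, hh₂0, hVII', hTfd⟩
  let e : aux17.GData n := ⟨g, sfun, hg, hII'b, hsint, hs0, hsfunlip, hIII'⟩
  have hTfD : ∀ x : Cb n, HasFDerivAt Tf (d.TfdL x) x := d.tf_hasFDerivAt Tf hTf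
  have hTfC : ContDiff ℝ 1 Tf := d.tf_contDiff Tf hTf
  have hGC : ContDiff ℝ 1 e.Gmap := e.g_contDiff
  let ΦCL : Euc n →L[ℝ] Cb n := aux17.PhiCL Φ ΦC hΦC K hK0 hΦnorm
  let c₀ : Cb n := H₁ ((0, 0), 0)
  -- splitting of the integral in `H₁`
  have hsplit : ∀ (x : Cb n) (ε : ℝ) (t : Set.Ici (0:ℝ)),
      (∫ s in (0:ℝ)..(t:ℝ), Φinv s (h (Set.projIci 0 s) + ε • f s (x (Set.projIci 0 s))))
        = (∫ s in (0:ℝ)..(t:ℝ), Φinv s (h (Set.projIci 0 s)))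
          + ε • ∫ s in (0:ℝ)..(t:ℝ), Φinv s (f s (x (Set.projIci 0 s))) := by
    intro x ε t
    have i1 : IntervalIntegrable (fun s => Φinv s (h (Set.projIci 0 s))) volume 0 t :=
      aux17.intInt_phiinv hΦinvcont (aux17.cont_comp h) t.2
    have i2 : IntervalIntegrable (fun s => Φinv s (f s (x (Set.projIci 0 s)))) volume 0 t :=
      aux17.intInt_phiinv hΦinvcont (aux17.cont_f_comp hf x) t.2
    calc (∫ s in (0:ℝ)..(t:ℝ), Φinv s (h (Set.projIci 0 s) + ε • f s (x (Set.projIci 0 s))))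
        = ∫ s in (0:ℝ)..(t:ℝ), (Φinv s (h (Set.projIci 0 s))
            + ε • Φinv s (f s (x (Set.projIci 0 s)))) := by
          congr 1
          funext s
          rw [map_add, _root_.map_smul]
      _ = (∫ s in (0:ℝ)..(t:ℝ), Φinv s (h (Set.projIci 0 s)))
            + ∫ s in (0:ℝ)..(t:ℝ), ε • Φinv s (f s (x (Set.projIci 0 s))) :=
          intervalIntegral.integral_add i1 (i2.smul ε)
      _ = _ := by rw [intervalIntegral.integral_smul]
  have hc : ∀ t : Set.Ici (0:ℝ),
      c₀ t = -(Φ t (∫ s in (0:ℝ)..(t:ℝ), Φinv s (h (Set.projIci 0 s)))) := by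
    intro t
    show H₁ ((0, 0), 0) t = _
    rw [hH₁ 0 0 0 t]
    simp
  have hH₁eq : ∀ (x : Cb n) (v : ↥(LinearMap.ker (Λ : Euc n →ₗ[ℝ] Euc n))) (ε : ℝ),
      H₁ ((x, v), ε) = x - ΦCL (v : Euc n) + c₀ - ε • Tf x := by
    intro x v ε
    apply BoundedContinuousFunction.ext
    intro t
    rw [hH₁ x v ε t]
    simp only [BoundedContinuousFunction.sub_apply, BoundedContinuousFunction.add_apply,
      BoundedContinuousFunction.smul_apply]
    rw [hc t, show ΦCL (v : Euc n) = ΦC (v : Euc n) from rfl, hΦC, hTf x t, hsplit x ε t,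
      map_add (Φ (t:ℝ)), _root_.map_smul (Φ (t:ℝ))]
    abel
  have hH₂eq : ∀ (x : Cb n) (v : ↥(LinearMap.ker (Λ : Euc n →ₗ[ℝ] Euc n))) (ε : ℝ),
      H₂ ((x, v), ε) = WT (e.Gmap x - Γ (Tf x)) := by
    intro x v ε
    rw [hH₂ x v ε]
    rfl
  have c11 : ContDiff ℝ 1 (fun q : (Cb n × ↥(LinearMap.ker (Λ : Euc n →ₗ[ℝ] Euc n))) × ℝ => q.1.1) :=
    contDiff_fst.comp contDiff_fst
  constructor
  · -- continuous differentiability of `H`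
    have hfun : (fun q => (H₁ q, H₂ q)) = fun q : (Cb n × ↥(LinearMap.ker (Λ : Euc n →ₗ[ℝ] Euc n))) × ℝ =>
        (q.1.1 - ΦCL (q.1.2 : Euc n) + c₀ - q.2 • Tf q.1.1,
          WT (e.Gmap q.1.1 - Γ (Tf q.1.1))) := by
      funext q
      cases q with
      | mk q1 qe => cases q1 with
        | mk qx qv => rw [hH₁eq qx qv qe, hH₂eq qx qv qe]
    rw [hfun]
    apply ContDiff.prodMk
    · exact ((c11.sub (ΦCL.contDiff.comp
        (((LinearMap.ker (Λ : Euc n →ₗ[ℝ] Euc n)).subtypeL.contDiff).comp (contDiff_snd.comp contDiff_fst)))).add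
          contDiff_const).sub ((contDiff_snd).smul (hTfC.comp c11))
    · exact WT.contDiff.comp ((hGC.comp c11).sub (Γ.contDiff.comp (hTfC.comp c11)))
  · -- the partial Fréchet derivative in `(x, v)`
    intro x v ε D hD
    let fstL : (Cb n × ↥(LinearMap.ker (Λ : Euc n →ₗ[ℝ] Euc n))) →L[ℝ] Cb n := ContinuousLinearMap.fst ℝ _ _
    let sndL : (Cb n × ↥(LinearMap.ker (Λ : Euc n →ₗ[ℝ] Euc n))) →L[ℝ] ↥(LinearMap.ker (Λ : Euc n →ₗ[ℝ] Euc n)) :=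
      ContinuousLinearMap.snd ℝ _ _
    let D₁ : (Cb n × ↥(LinearMap.ker (Λ : Euc n →ₗ[ℝ] Euc n))) →L[ℝ] Cb n :=
      (fstL - ΦCL.comp ((LinearMap.ker (Λ : Euc n →ₗ[ℝ] Euc n)).subtypeL.comp sndL)) - ε • ((d.TfdL x).comp fstL)
    let D₂ : (Cb n × ↥(LinearMap.ker (Λ : Euc n →ₗ[ℝ] Euc n))) →L[ℝ] Euc p :=
      WT.comp ((e.DG x).comp fstL - Γ.comp ((d.TfdL x).comp fstL))
    have hDeq : D = D₁.prod D₂ := by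
      apply ContinuousLinearMap.ext
      rintro ⟨ψ, w⟩
      obtain ⟨h1, h2⟩ := hD ψ w
      apply Prod.ext
      · apply BoundedContinuousFunction.ext
        intro t
        rw [show ((D₁.prod D₂) (ψ, w)).1 = D₁ (ψ, w) from rfl, h1 t]
        show _ = ((ψ - ΦCL (w : Euc n)) - ε • (d.TfdL x ψ)) t
        simp only [BoundedContinuousFunction.sub_apply, BoundedContinuousFunction.smul_apply]
        rw [show ΦCL (w : Euc n) = ΦC (w : Euc n) from rfl, hΦC,
          show d.TfdL x ψ = Tfd x ψ from rfl, hTfd x ψ t]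
      · rw [show ((D₁.prod D₂) (ψ, w)).2 = D₂ (ψ, w) from rfl, h2]
        rfl
    rw [hDeq]
    have hfun2 : (fun q : Cb n × ↥(LinearMap.ker (Λ : Euc n →ₗ[ℝ] Euc n)) => (H₁ (q, ε), H₂ (q, ε))) =
        fun q : Cb n × ↥(LinearMap.ker (Λ : Euc n →ₗ[ℝ] Euc n)) =>
          (q.1 - ΦCL (q.2 : Euc n) + c₀ - ε • Tf q.1, WT (e.Gmap q.1 - Γ (Tf q.1))) := by
      funext q
      cases q with
      | mk qx qv => rw [hH₁eq qx qv ε, hH₂eq qx qv ε]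
    rw [hfun2]
    have hTfq : HasFDerivAt (fun q : Cb n × ↥(LinearMap.ker (Λ : Euc n →ₗ[ℝ] Euc n)) => Tf q.1)
        ((d.TfdL x).comp fstL) (x, v) :=
      (hTfD x).comp (x, v) (hasFDerivAt_fst)
    apply HasFDerivAt.prodMk
    · have hlin : HasFDerivAt (fun q : Cb n × ↥(LinearMap.ker (Λ : Euc n →ₗ[ℝ] Euc n)) => q.1 - ΦCL (q.2 : Euc n))
          (fstL - ΦCL.comp ((LinearMap.ker (Λ : Euc n →ₗ[ℝ] Euc n)).subtypeL.comp sndL)) (x, v) :=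
        (fstL - ΦCL.comp ((LinearMap.ker (Λ : Euc n →ₗ[ℝ] Euc n)).subtypeL.comp sndL)).hasFDerivAt
      exact (hlin.add_const c₀).sub (hTfq.const_smul ε)
    · have hGq : HasFDerivAt (fun q : Cb n × ↥(LinearMap.ker (Λ : Euc n →ₗ[ℝ] Euc n)) => e.Gmap q.1)
          ((e.DG x).comp fstL) (x, v) :=
        by have hG0 := e.g_hasFDerivAt x; exact hG0.comp (x, v) (hasFDerivAt_fst (𝕜 := ℝ) (E := Cb n) (F := ↥(LinearMap.ker (Λ : Euc n →ₗ[ℝ] Euc n))) (p := (x, v)))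
      have hΓq : HasFDerivAt (fun q : Cb n × ↥(LinearMap.ker (Λ : Euc n →ₗ[ℝ] Euc n)) => Γ (Tf q.1))
          (Γ.comp ((d.TfdL x).comp fstL)) (x, v) :=
        Γ.hasFDerivAt.comp (x, v) hTfq
      exact WT.hasFDerivAt.comp (x, v) (hGq.sub hΓq)
end
end

section
/- Suppose conditions (I) and (II) hold. Then for every ε ∈ ℝ the map from 𝒞 × ker(Λ) to the space of bounded linear operators from 𝒞 × ker(Λ) to 𝒞 given by (x,v) ↦ (∂H₁/∂(x,v))((x,v),ε) is continuous; in fact, for all x₁, x₂ ∈ 𝒞, v₁, v₂ ∈ ker(Λ), the operator norm of the difference (∂H₁/∂(x,v))((x₁,v₁),ε) − (∂H₁/∂(x,v))((x₂,v₂),ε) is at most |ε| K α⁻¹ sup_{s≥0} ‖(∂f/∂x)(s,x₁(s)) − (∂f/∂x)(s,x₂(s))‖, and this bound tends to 0 as ‖x₁ − x₂‖∞ → 0. -/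
open MeasureTheory Set

noncomputable section

set_option maxHeartbeats 2000000 in
theorem stmt_19 {n : ℕ} (hn : 1 ≤ n)
    -- the coefficient matrix `A`, the fundamental matrix `Φ` and its pointwise inverse `Φinv`
    (A Φ Φinv : ℝ → (Euc n →L[ℝ] Euc n))
    (hA : ContinuousOn A (Set.Ici 0))
    (hΦ0 : Φ 0 = 1)
    (hΦode : ∀ t ∈ Set.Ici (0:ℝ), HasDerivWithinAt Φ (A t ∘L Φ t) (Set.Ici 0) t)
    (hΦinv : ∀ t ∈ Set.Ici (0:ℝ), Φ t ∘L Φinv t = 1 ∧ Φinv t ∘L Φ t = 1)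
    -- condition guaranteeing `Φ(·)∫₀· Φ⁻¹(s)ψ(s) ds ∈ 𝒞`
    (K α : ℝ) (hK : 0 < K) (hα : 0 < α)
    (hKα : ∀ s t : ℝ, 0 ≤ s → s ≤ t → ‖Φ t ∘L Φinv s‖ ≤ K * Real.exp (-α * (t - s)))
    -- the bounded linear boundary operator `Γ` and the matrix `Λ`, whose columns are `Γ(Φᵢ)`
    (Γ : Cb n →L[ℝ] Euc n)
    (ΦC : Euc n → Cb n) (hΦC : ∀ (v : Euc n) (t : Set.Ici (0:ℝ)), ΦC v t = Φ t v)
    (Λ : Euc n →L[ℝ] Euc n) (hΛ : ∀ v, Λ v = Γ (ΦC v))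
    -- `f` is continuously differentiable, and condition (II) holds
    (f : ℝ → Euc n → Euc n)
    (hf : ContDiff ℝ 1 fun q : ℝ × Euc n => f q.1 q.2)
    (hIIa : ∀ S : Set (Euc n), IsCompact S →
      UniformContinuousOn (fun q : ℝ × Euc n => fderiv ℝ (f q.1) q.2) (Set.Ici 0 ×ˢ S))
    (hIIb : ∃ M, ∀ t ≥ (0:ℝ), ‖fderiv ℝ (f t) 0‖ ≤ M)
    -- `h ∈ 𝒞`
    (h : Cb n)
    -- the partial derivative map `(x,v) ↦ ∂H₁/∂(x,v)((x,v),ε)`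
    (DH₁ : Cb n × ↥(LinearMap.ker (Λ : Euc n →ₗ[ℝ] Euc n)) → ℝ → ((Cb n × ↥(LinearMap.ker (Λ : Euc n →ₗ[ℝ] Euc n))) →L[ℝ] Cb n))
    (hDH₁ : ∀ (x : Cb n) (v : ↥(LinearMap.ker (Λ : Euc n →ₗ[ℝ] Euc n))) (ε : ℝ)
        (ψ : Cb n) (w : ↥(LinearMap.ker (Λ : Euc n →ₗ[ℝ] Euc n))) (t : Set.Ici (0:ℝ)),
      DH₁ (x, v) ε (ψ, w) t = ψ t - Φ t (w : Euc n) -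
        ε • Φ t (∫ s in (0:ℝ)..(t:ℝ),
          Φinv s (fderiv ℝ (f s) (x (Set.projIci 0 s)) (ψ (Set.projIci 0 s))))) :
    -- (a) for each `ε`, `(x,v) ↦ ∂H₁/∂(x,v)((x,v),ε)` is continuous;
    -- (b) the operator norm of the difference of derivatives at `(x₁,v₁)` and `(x₂,v₂)` is at
    --     most `|ε| K α⁻¹ · sup_{s≥0} ‖(∂f/∂x)(s,x₁(s)) − (∂f/∂x)(s,x₂(s))‖`;
    -- (c) this bound tends to `0` as `‖x₁ − x₂‖∞ → 0`
    (∀ ε : ℝ, Continuous fun q : Cb n × ↥(LinearMap.ker (Λ : Euc n →ₗ[ℝ] Euc n)) => DH₁ q ε) ∧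
    (∀ (ε : ℝ) (x₁ x₂ : Cb n) (v₁ v₂ : ↥(LinearMap.ker (Λ : Euc n →ₗ[ℝ] Euc n))) (M : ℝ),
      (∀ s ≥ (0:ℝ),
        ‖fderiv ℝ (f s) (x₁ (Set.projIci 0 s)) -
          fderiv ℝ (f s) (x₂ (Set.projIci 0 s))‖ ≤ M) →
      ‖DH₁ (x₁, v₁) ε - DH₁ (x₂, v₂) ε‖ ≤ |ε| * K * α⁻¹ * M) ∧
    (∀ (x₂ : Cb n) (η : ℝ), 0 < η → ∃ δ > (0:ℝ), ∀ x₁ : Cb n, ‖x₁ - x₂‖ ≤ δ →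
      ∀ s ≥ (0:ℝ),
        ‖fderiv ℝ (f s) (x₁ (Set.projIci 0 s)) -
          fderiv ℝ (f s) (x₂ (Set.projIci 0 s))‖ ≤ η) := by
  classical
  -- continuity of the projection onto `[0,∞)`
  have hproj : Continuous (Set.projIci (0:ℝ)) := by
    unfold Set.projIci
    exact Continuous.subtype_mk (continuous_const.max continuous_id) _
  -- continuity of the full partial-derivative map
  have hfdcont : Continuous fun q : ℝ × Euc n => fderiv ℝ (f q.1) q.2 := by
    have key : ∀ (s : ℝ) (y : Euc n), fderiv ℝ (f s) y =
        (fderiv ℝ (fun q : ℝ × Euc n => f q.1 q.2) (s, y)).comp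
          (ContinuousLinearMap.inr ℝ ℝ (Euc n)) := by
      intro s y
      have hF := (hf.differentiable one_ne_zero (s, y)).hasFDerivAt
      have hg : HasFDerivAt (fun z : Euc n => ((s, z) : ℝ × Euc n))
          (ContinuousLinearMap.inr ℝ ℝ (Euc n)) y := by
        have := (HasFDerivAt.prodMk (hasFDerivAt_const (𝕜 := ℝ) s y) (hasFDerivAt_id (𝕜 := ℝ) y) :
          HasFDerivAt (fun z : Euc n => ((s, z) : ℝ × Euc n)) _ y)
        exact this
      exact (hF.comp y hg).fderiv
    have : (fun q : ℝ × Euc n => fderiv ℝ (f q.1) q.2) =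
        fun q => (fderiv ℝ (fun q : ℝ × Euc n => f q.1 q.2) q).comp
          (ContinuousLinearMap.inr ℝ ℝ (Euc n)) := funext fun q => key q.1 q.2
    rw [this]
    exact (hf.continuous_fderiv one_ne_zero).clm_comp continuous_const
  -- continuity of `Φ` and `Φinv`
  have hΦcont : ContinuousOn Φ (Set.Ici 0) := fun t ht =>
    (hΦode t ht).continuousWithinAt
  have hΦinvcont : ContinuousOn Φinv (Set.Ici 0) := by
    have heq : ∀ t ∈ Set.Ici (0:ℝ), Φinv t = Ring.inverse (Φ t) := by
      intro t ht
      exact (Ring.inverse_unit ⟨Φ t, Φinv t, (hΦinv t ht).1, (hΦinv t ht).2⟩).symm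
    intro s hs
    have h0 : ContinuousAt (Ring.inverse : (Euc n →L[ℝ] Euc n) → (Euc n →L[ℝ] Euc n)) (Φ s) :=
      NormedRing.inverse_continuousAt ⟨Φ s, Φinv s, (hΦinv s hs).1, (hΦinv s hs).2⟩
    have h1 : ContinuousWithinAt (fun t => Ring.inverse (Φ t)) (Set.Ici 0) s :=
      h0.comp_continuousWithinAt (hΦcont s hs)
    exact h1.congr heq (heq s hs)
  -- continuity and interval-integrability of the integrands
  have hgcont : ∀ x ψ : Cb n, ContinuousOn
      (fun s => Φinv s (fderiv ℝ (f s) (x (Set.projIci 0 s)) (ψ (Set.projIci 0 s))))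
      (Set.Ici 0) := by
    intro x ψ
    apply hΦinvcont.clm_apply
    have h1 : Continuous fun s : ℝ => fderiv ℝ (f s) (x (Set.projIci 0 s)) :=
      hfdcont.comp (continuous_id.prodMk (x.continuous.comp hproj))
    exact (h1.clm_apply (ψ.continuous.comp hproj)).continuousOn
  have hgint : ∀ (x ψ : Cb n) (t : ℝ), 0 ≤ t → IntervalIntegrable
      (fun s => Φinv s (fderiv ℝ (f s) (x (Set.projIci 0 s)) (ψ (Set.projIci 0 s))))
      volume 0 t := by
    intro x ψ t ht
    apply ContinuousOn.intervalIntegrable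
    apply (hgcont x ψ).mono
    rw [Set.uIcc_of_le ht]
    exact Set.Icc_subset_Ici_self
  -- the elementary exponential integral estimate
  have hexp : ∀ t : ℝ, 0 ≤ t → ∫ s in (0:ℝ)..t, Real.exp (-α*(t-s)) ≤ α⁻¹ := by
    intro t ht
    have hanti : ∀ s ∈ Set.uIcc (0:ℝ) t,
        HasDerivAt (fun s => α⁻¹ * Real.exp (-α*(t-s))) (Real.exp (-α*(t-s))) s := by
      intro s _
      have hu : HasDerivAt (fun s : ℝ => -α*(t-s)) α s := by
        have : HasDerivAt (fun s : ℝ => α * s - α * t) (α * 1) s :=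
          ((hasDerivAt_id s).const_mul α).sub_const (α*t)
        rw [mul_one] at this
        convert this using 2 with s
        · ring
      have := hu.exp.const_mul α⁻¹
      rw [mul_comm (Real.exp _) α, ← mul_assoc, inv_mul_cancel₀ hα.ne', one_mul] at this
      exact this
    have hint : IntervalIntegrable (fun s => Real.exp (-α*(t-s))) volume 0 t :=
      (Real.continuous_exp.comp (by fun_prop)).intervalIntegrable 0 t
    rw [intervalIntegral.integral_eq_sub_of_hasDerivAt hanti hint]
    have h1 : Real.exp (-α*(t-t)) = 1 := by simp
    have h3 : (0:ℝ) < α⁻¹ := by positivity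
    nlinarith [Real.exp_pos (-α*(t-0))]
  -- part (b)
  have hb : ∀ (ε : ℝ) (x₁ x₂ : Cb n) (v₁ v₂ : ↥(LinearMap.ker (Λ : Euc n →ₗ[ℝ] Euc n))) (M : ℝ),
      (∀ s ≥ (0:ℝ),
        ‖fderiv ℝ (f s) (x₁ (Set.projIci 0 s)) -
          fderiv ℝ (f s) (x₂ (Set.projIci 0 s))‖ ≤ M) →
      ‖DH₁ (x₁, v₁) ε - DH₁ (x₂, v₂) ε‖ ≤ |ε| * K * α⁻¹ * M := by
    intro ε x₁ x₂ v₁ v₂ M hM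
    have hM0 : (0:ℝ) ≤ M := le_trans (norm_nonneg _) (hM 0 le_rfl)
    have hC0 : (0:ℝ) ≤ |ε| * K * α⁻¹ * M := by positivity
    refine ContinuousLinearMap.opNorm_le_bound _ hC0 ?_
    rintro ⟨ψ, w⟩
    rw [BoundedContinuousFunction.norm_le (mul_nonneg hC0 (norm_nonneg _))]
    intro t
    have ht0 : (0:ℝ) ≤ (t:ℝ) := t.2
    set g₁ : ℝ → Euc n := fun s =>
      Φinv s (fderiv ℝ (f s) (x₁ (Set.projIci 0 s)) (ψ (Set.projIci 0 s))) with hg₁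
    set g₂ : ℝ → Euc n := fun s =>
      Φinv s (fderiv ℝ (f s) (x₂ (Set.projIci 0 s)) (ψ (Set.projIci 0 s))) with hg₂
    have hi₁ : IntervalIntegrable g₁ volume 0 (t:ℝ) := hgint x₁ ψ t ht0
    have hi₂ : IntervalIntegrable g₂ volume 0 (t:ℝ) := hgint x₂ ψ t ht0
    have hval : ((DH₁ (x₁, v₁) ε - DH₁ (x₂, v₂) ε) (ψ, w)) t
        = ε • Φ t (∫ s in (0:ℝ)..(t:ℝ), g₂ s) - ε • Φ t (∫ s in (0:ℝ)..(t:ℝ), g₁ s) := by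
      simp only [ContinuousLinearMap.sub_apply, BoundedContinuousFunction.sub_apply,
        hDH₁, hg₁, hg₂]
      abel
    rw [hval, ← smul_sub, ← map_sub, ← intervalIntegral.integral_sub hi₂ hi₁,
      norm_smul, Real.norm_eq_abs]
    have hcomm : Φ (t:ℝ) (∫ s in (0:ℝ)..(t:ℝ), (g₂ s - g₁ s))
        = ∫ s in (0:ℝ)..(t:ℝ), Φ (t:ℝ) (g₂ s - g₁ s) :=
      (ContinuousLinearMap.intervalIntegral_comp_comm _ (hi₂.sub hi₁)).symm
    rw [hcomm]
    have hptwise : ∀ s ∈ Set.uIoc (0:ℝ) (t:ℝ),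
        ‖Φ (t:ℝ) (g₂ s - g₁ s)‖ ≤ K * Real.exp (-α*((t:ℝ)-s)) * (M * ‖ψ‖) := by
      intro s hs
      rw [Set.uIoc_of_le ht0] at hs
      have hs0 : (0:ℝ) ≤ s := hs.1.le
      have hst : s ≤ (t:ℝ) := hs.2
      have hrw : g₂ s - g₁ s = Φinv s
          ((fderiv ℝ (f s) (x₂ (Set.projIci 0 s)) -
            fderiv ℝ (f s) (x₁ (Set.projIci 0 s))) (ψ (Set.projIci 0 s))) := by
        simp [hg₁, hg₂, ContinuousLinearMap.sub_apply, map_sub]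
      rw [hrw]
      have h1 : Φ (t:ℝ) (Φinv s ((fderiv ℝ (f s) (x₂ (Set.projIci 0 s)) -
            fderiv ℝ (f s) (x₁ (Set.projIci 0 s))) (ψ (Set.projIci 0 s))))
          = (Φ (t:ℝ) ∘L Φinv s) ((fderiv ℝ (f s) (x₂ (Set.projIci 0 s)) -
            fderiv ℝ (f s) (x₁ (Set.projIci 0 s))) (ψ (Set.projIci 0 s))) := rfl
      rw [h1]
      calc ‖(Φ (t:ℝ) ∘L Φinv s) ((fderiv ℝ (f s) (x₂ (Set.projIci 0 s)) -
            fderiv ℝ (f s) (x₁ (Set.projIci 0 s))) (ψ (Set.projIci 0 s)))‖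
          ≤ ‖Φ (t:ℝ) ∘L Φinv s‖ * ‖(fderiv ℝ (f s) (x₂ (Set.projIci 0 s)) -
            fderiv ℝ (f s) (x₁ (Set.projIci 0 s))) (ψ (Set.projIci 0 s))‖ :=
            ContinuousLinearMap.le_opNorm _ _
        _ ≤ (K * Real.exp (-α * ((t:ℝ) - s))) * (M * ‖ψ‖) := by
            apply mul_le_mul (hKα s t hs0 hst)
            · calc ‖(fderiv ℝ (f s) (x₂ (Set.projIci 0 s)) -
                  fderiv ℝ (f s) (x₁ (Set.projIci 0 s))) (ψ (Set.projIci 0 s))‖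
                  ≤ ‖fderiv ℝ (f s) (x₂ (Set.projIci 0 s)) -
                    fderiv ℝ (f s) (x₁ (Set.projIci 0 s))‖ * ‖ψ (Set.projIci 0 s)‖ :=
                    ContinuousLinearMap.le_opNorm _ _
                _ ≤ M * ‖ψ‖ := by
                    apply mul_le_mul _ (ψ.norm_coe_le_norm _) (norm_nonneg _) hM0
                    rw [norm_sub_rev]
                    exact hM s hs0
            · positivity
            · positivity
        _ = K * Real.exp (-α*((t:ℝ)-s)) * (M * ‖ψ‖) := by ring
    have hbdint : IntervalIntegrable
        (fun s => K * Real.exp (-α*((t:ℝ)-s)) * (M * ‖ψ‖)) volume 0 (t:ℝ) := by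
      apply Continuous.intervalIntegrable
      fun_prop
    have hnorm : ‖∫ s in (0:ℝ)..(t:ℝ), Φ (t:ℝ) (g₂ s - g₁ s)‖
        ≤ |∫ s in (0:ℝ)..(t:ℝ), K * Real.exp (-α*((t:ℝ)-s)) * (M * ‖ψ‖)| := by
      refine (intervalIntegral.norm_integral_le_of_norm_le ht0 ?_ hbdint).trans (le_abs_self _)
      exact MeasureTheory.ae_of_all _ (fun s hs => hptwise s (by rwa [Set.uIoc_of_le ht0]))
    have hval2 : ∫ s in (0:ℝ)..(t:ℝ), K * Real.exp (-α*((t:ℝ)-s)) * (M * ‖ψ‖)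
        ≤ K * α⁻¹ * (M * ‖ψ‖) := by
      have : ∀ s : ℝ, K * Real.exp (-α*((t:ℝ)-s)) * (M * ‖ψ‖)
          = (K * (M * ‖ψ‖)) * Real.exp (-α*((t:ℝ)-s)) := fun s => by ring
      simp_rw [this]
      rw [intervalIntegral.integral_const_mul]
      calc (K * (M * ‖ψ‖)) * ∫ s in (0:ℝ)..(t:ℝ), Real.exp (-α*((t:ℝ)-s))
          ≤ (K * (M * ‖ψ‖)) * α⁻¹ :=
            mul_le_mul_of_nonneg_left (hexp (t:ℝ) ht0) (by positivity)
        _ = K * α⁻¹ * (M * ‖ψ‖) := by ring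
    have hint0 : (0:ℝ) ≤ ∫ s in (0:ℝ)..(t:ℝ), K * Real.exp (-α*((t:ℝ)-s)) * (M * ‖ψ‖) := by
      apply intervalIntegral.integral_nonneg ht0
      intro s _
      positivity
    rw [abs_of_nonneg hint0] at hnorm
    have hψle : ‖ψ‖ ≤ ‖((ψ, w) : Cb n × ↥(LinearMap.ker (Λ : Euc n →ₗ[ℝ] Euc n)))‖ := norm_fst_le ((ψ, w) : Cb n × ↥(LinearMap.ker (Λ : Euc n →ₗ[ℝ] Euc n)))
    calc |ε| * ‖∫ s in (0:ℝ)..(t:ℝ), Φ (t:ℝ) (g₂ s - g₁ s)‖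
        ≤ |ε| * (K * α⁻¹ * (M * ‖ψ‖)) :=
          mul_le_mul_of_nonneg_left (hnorm.trans hval2) (abs_nonneg _)
      _ = (|ε| * K * α⁻¹ * M) * ‖ψ‖ := by ring
      _ ≤ (|ε| * K * α⁻¹ * M) * ‖((ψ, w) : Cb n × ↥(LinearMap.ker (Λ : Euc n →ₗ[ℝ] Euc n)))‖ :=
          mul_le_mul_of_nonneg_left hψle hC0
  -- part (c)
  have hc : ∀ (x₂ : Cb n) (η : ℝ), 0 < η → ∃ δ > (0:ℝ), ∀ x₁ : Cb n, ‖x₁ - x₂‖ ≤ δ →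
      ∀ s ≥ (0:ℝ),
        ‖fderiv ℝ (f s) (x₁ (Set.projIci 0 s)) -
          fderiv ℝ (f s) (x₂ (Set.projIci 0 s))‖ ≤ η := by
    intro x₂ η hη
    set S : Set (Euc n) := Metric.closedBall 0 (‖x₂‖ + 1) with hS
    have hScomp : IsCompact S := isCompact_closedBall 0 _
    have huc := hIIa S hScomp
    rw [Metric.uniformContinuousOn_iff] at huc
    obtain ⟨δ', hδ', hδ'2⟩ := huc η hη
    refine ⟨min (δ'/2) 1, by positivity, ?_⟩
    intro x₁ hx₁ s hs
    have hx₁n : ‖x₁‖ ≤ ‖x₂‖ + 1 := by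
      have h1 := norm_add_le (x₁ - x₂) x₂
      simp only [sub_add_cancel] at h1
      have h2 : ‖x₁ - x₂‖ ≤ 1 := hx₁.trans (min_le_right _ _)
      linarith
    have hmem₁ : ((s, (x₁ (Set.projIci 0 s) : Euc n)) : ℝ × Euc n) ∈ Set.Ici (0:ℝ) ×ˢ S := by
      refine ⟨hs, ?_⟩
      simp only [hS, Metric.mem_closedBall, dist_zero_right]
      exact le_trans (x₁.norm_coe_le_norm _) hx₁n
    have hmem₂ : ((s, (x₂ (Set.projIci 0 s) : Euc n)) : ℝ × Euc n) ∈ Set.Ici (0:ℝ) ×ˢ S := by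
      refine ⟨hs, ?_⟩
      simp only [hS, Metric.mem_closedBall, dist_zero_right]
      exact le_trans (x₂.norm_coe_le_norm _) (by linarith)
    have hdist : dist ((s, (x₁ (Set.projIci 0 s) : Euc n)) : ℝ × Euc n)
        (s, (x₂ (Set.projIci 0 s) : Euc n)) < δ' := by
      rw [Prod.dist_eq]
      have h1 : dist (x₁ (Set.projIci 0 s)) (x₂ (Set.projIci 0 s)) ≤ dist x₁ x₂ :=
        BoundedContinuousFunction.dist_coe_le_dist _
      have h2 : dist x₁ x₂ ≤ δ'/2 := by
        rw [dist_eq_norm]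
        exact hx₁.trans (min_le_left _ _)
      have h3 : dist (s : ℝ) s = 0 := dist_self s
      rw [h3]
      have : max (0:ℝ) (dist (x₁ (Set.projIci 0 s)) (x₂ (Set.projIci 0 s))) =
          dist (x₁ (Set.projIci 0 s)) (x₂ (Set.projIci 0 s)) :=
        max_eq_right dist_nonneg
      rw [this]
      linarith
    have := hδ'2 _ hmem₁ _ hmem₂ hdist
    rw [dist_eq_norm] at this
    exact this.le
  refine ⟨?_, hb, hc⟩
  -- part (a)
  intro ε
  refine (Metric.continuous_iff (f := fun q : Cb n × ↥(LinearMap.ker (Λ : Euc n →ₗ[ℝ] Euc n)) => DH₁ q ε)).mpr ?_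
  intro q₂ η hη
  set c := |ε| * K * α⁻¹ with hcdef
  have hc0 : (0:ℝ) ≤ c := by positivity
  obtain ⟨δ, hδ, hδ'⟩ := hc q₂.1 (η / (c+1)) (by positivity)
  refine ⟨δ, hδ, ?_⟩
  intro q₁ hq₁
  have hx : ‖q₁.1 - q₂.1‖ ≤ δ := by
    have h1 : dist q₁.1 q₂.1 ≤ dist q₁ q₂ :=
      (le_max_left _ _).trans_eq (Prod.dist_eq).symm
    rw [dist_eq_norm] at h1
    exact h1.trans hq₁.le
  have hb' := hb ε q₁.1 q₂.1 q₁.2 q₂.2 (η / (c+1)) (hδ' q₁.1 hx)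
  show dist (DH₁ q₁ ε) (DH₁ q₂ ε) < η
  rw [show dist (DH₁ q₁ ε) (DH₁ q₂ ε) = ‖DH₁ q₁ ε - DH₁ q₂ ε‖ from dist_eq_norm (DH₁ q₁ ε) (DH₁ q₂ ε)]
  calc ‖DH₁ q₁ ε - DH₁ q₂ ε‖
      = ‖DH₁ (q₁.1, q₁.2) ε - DH₁ (q₂.1, q₂.2) ε‖ := by rw [Prod.mk.eta, Prod.mk.eta]
    _ ≤ c * (η / (c+1)) := hb'
    _ < η := by
        have hd : (0:ℝ) < η / (c+1) := by positivity
        have : c * (η / (c+1)) < (c+1) * (η / (c+1)) := by nlinarith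
        calc c * (η / (c+1)) < (c+1) * (η / (c+1)) := this
          _ = η := by field_simp
end
end
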